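/- arXiv:1510.06618 — 8 statements merged into one kernel-verified Lean document; each statement's English description precedes it below -/
import Mathlib

section
/- Let K be an N×N Hermitian contracting matrix with eigenvalues λ_1,…,λ_N (listed with multiplicity) and P a determinantal sampling design with kernel K. Then the sample size #S has the law of a sum of N independent Bernoulli random variables with parameters λ_1,…,λ_N; equivalently, for every complex number z, ∑_{s ⊆ U} P(s) z^{#s} = det(I_N + (z−1)K) = ∏_{i=1}^N (1 − λ_i + λ_i z). -/
open Matrix Finset

variable {N : ℕ}

lemma sum_pow_card {α : Type*} [DecidableEq α] (s : Finset α) (x : ℂ) :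
    ∑ t ∈ s.powerset, x ^ t.card = (x + 1) ^ s.card := by
  induction s using Finset.induction with
  | empty => simp
  | @insert a s ha ih =>
    rw [Finset.powerset_insert, Finset.sum_union, Finset.sum_image, Finset.card_insert_of_notMem ha]
    · have : ∀ t ∈ s.powerset, x ^ (insert a t).card = x * x ^ t.card := by
        intro t ht
        rw [Finset.card_insert_of_notMem (fun h => ha (Finset.mem_powerset.mp ht h))]
        ring
      rw [Finset.sum_congr rfl this, ← Finset.mul_sum, ih]
      ring
    · intro t ht t' ht' h
      have hat : a ∉ t := fun h' => ha (Finset.mem_powerset.mp ht h')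
      have hat' : a ∉ t' := fun h' => ha (Finset.mem_powerset.mp ht' h')
      rw [← Finset.erase_insert hat, ← Finset.erase_insert hat', h]
    · rw [Finset.disjoint_left]
      intro t ht h2
      obtain ⟨t', ht', rfl⟩ := Finset.mem_image.mp h2
      exact ha (Finset.mem_powerset.mp ht (Finset.mem_insert_self a t'))

lemma det_piecewise (K : Matrix (Fin N) (Fin N) ℂ) (s : Finset (Fin N)) :
    (Matrix.of (fun i j => if i ∈ s then K i j else (1 : Matrix (Fin N) (Fin N) ℂ) i j)).det =
      (K.submatrix (fun i : {x // x ∈ s} => i.1) (fun j : {x // x ∈ s} => j.1)).det := by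
  classical
  let e : {x // x ∈ s} ⊕ {x // ¬ x ∈ s} ≃ Fin N := Equiv.sumCompl (· ∈ s)
  rw [← Matrix.det_submatrix_equiv_self e]
  have : (Matrix.of (fun i j => if i ∈ s then K i j else (1 : Matrix (Fin N) (Fin N) ℂ) i j)).submatrix e e
      = Matrix.fromBlocks (K.submatrix (fun i : {x // x ∈ s} => i.1) (fun j : {x // x ∈ s} => j.1))
          (K.submatrix (fun i : {x // x ∈ s} => i.1) (fun j : {x // ¬ x ∈ s} => j.1)) 0 1 := by
    ext i j
    cases i with
    | inl i =>
      cases j with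
      | inl j => simp [e, i.2]
      | inr j => simp [e, i.2]
    | inr i =>
      cases j with
      | inl j =>
        have : i.1 ≠ j.1 := fun h => i.2 (h ▸ j.2)
        simp [e, i.2, Matrix.one_apply, this]
      | inr j =>
        simp [e, i.2, Matrix.one_apply, Subtype.ext_iff]
  rw [this, Matrix.det_fromBlocks_zero₂₁, Matrix.det_one, mul_one]

lemma det_one_add_smul_eq (w : ℂ) (K : Matrix (Fin N) (Fin N) ℂ) :
    ((1 : Matrix (Fin N) (Fin N) ℂ) + w • K).det =
      ∑ s : Finset (Fin N), w ^ s.card *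
        (K.submatrix (fun i : {x // x ∈ s} => i.1) (fun j : {x // x ∈ s} => j.1)).det := by
  classical
  have h1 : ((1 : Matrix (Fin N) (Fin N) ℂ) + w • K : Matrix (Fin N) (Fin N) ℂ) =
      Matrix.of ((fun i => (w • K) i) + (fun i => (1 : Matrix (Fin N) (Fin N) ℂ) i)) := by
    ext i j
    simp [Matrix.add_apply]
    ring
  rw [h1]
  show (Matrix.detRowAlternating (R := ℂ) (n := Fin N)).toMultilinearMap
      ((fun i => (w • K) i) + (fun i => (1 : Matrix (Fin N) (Fin N) ℂ) i)) = _
  rw [MultilinearMap.map_add_univ]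
  apply Finset.sum_congr rfl
  intro s _
  have hpw : s.piecewise (fun i => (w • K) i) (fun i => (1 : Matrix (Fin N) (Fin N) ℂ) i)
      = s.piecewise (fun i => w • (s.piecewise (fun i => K i) (fun i => (1 : Matrix (Fin N) (Fin N) ℂ) i)) i)
          (s.piecewise (fun i => K i) (fun i => (1 : Matrix (Fin N) (Fin N) ℂ) i)) := by
    funext i j
    by_cases h : i ∈ s <;>
      simp [Finset.piecewise, h, Matrix.smul_apply]
  have hm : (s.piecewise (fun i => K i) (fun i => (1 : Matrix (Fin N) (Fin N) ℂ) i))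
      = Matrix.of (fun i j => if i ∈ s then K i j else (1 : Matrix (Fin N) (Fin N) ℂ) i j) := by
    funext i j
    by_cases h : i ∈ s <;> simp [Finset.piecewise, h]
  rw [hpw, MultilinearMap.map_piecewise_smul, hm]
  show (∏ _i ∈ s, w) • (Matrix.of
      (fun i j => if i ∈ s then K i j else (1 : Matrix (Fin N) (Fin N) ℂ) i j)).det = _
  rw [det_piecewise]
  simp [Finset.prod_const, smul_eq_mul]

/-- `P` is a determinantal sampling design with kernel `K`:
for every `s ⊆ U`, `∑_{s' ⊇ s} P(s') = det(K_{|s})`. -/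
def IsDSD {N : ℕ} (P : Finset (Fin N) → ℝ) (K : Matrix (Fin N) (Fin N) ℂ) : Prop :=
  ∀ s : Finset (Fin N),
    ((∑ s' ∈ Finset.univ.filter (fun s' => s ⊆ s'), P s' : ℝ) : ℂ) =
      (K.submatrix (fun i : {x // x ∈ s} => i.1) (fun j : {x // x ∈ s} => j.1)).det

/-- **Law of the sample size of a determinantal sampling design.**
If `P = DSD(K)` with `K` Hermitian contracting with eigenvalues `λ₁, …, λ_N`, then
the sample size `#S` is distributed as a sum of independent Bernoulli variables of
parameters `λ₁, …, λ_N`; equivalently, for every `z : ℂ`, the probability generating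
function satisfies `∑_s P(s) z^{#s} = det(I + (z−1)K) = ∏ᵢ (1 − λᵢ + λᵢ z)`. -/
theorem sample_size_law {N : ℕ} (K : Matrix (Fin N) (Fin N) ℂ) (hK : K.IsHermitian)
    (hcontr : ∀ i, hK.eigenvalues i ∈ Set.Icc (0 : ℝ) 1)
    (P : Finset (Fin N) → ℝ) (hpos : ∀ s, 0 ≤ P s) (hsum : ∑ s, P s = 1)
    (hDSD : IsDSD P K) :
    ∀ z : ℂ,
      (∑ s : Finset (Fin N), (P s : ℂ) * z ^ s.card) =
        ((1 : Matrix (Fin N) (Fin N) ℂ) + (z - 1) • K).det ∧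
      ((1 : Matrix (Fin N) (Fin N) ℂ) + (z - 1) • K).det =
        ∏ i, (1 - (hK.eigenvalues i : ℂ) + (hK.eigenvalues i : ℂ) * z) := by
  intro z
  constructor
  · rw [det_one_add_smul_eq (z - 1) K]
    have key : ∀ t : Finset (Fin N),
        (K.submatrix (fun i : {x // x ∈ t} => i.1) (fun j : {x // x ∈ t} => j.1)).det
          = ∑ s ∈ Finset.univ.filter (fun s => t ⊆ s), (P s : ℂ) := by
      intro t
      rw [← hDSD t]
      push_cast
      rfl
    calc ∑ s : Finset (Fin N), (P s : ℂ) * z ^ s.card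
        = ∑ s : Finset (Fin N), ∑ t : Finset (Fin N),
            (if t ⊆ s then (z - 1) ^ t.card * (P s : ℂ) else 0) := by
          refine Finset.sum_congr rfl fun s _ => ?_
          rw [← Finset.sum_filter]
          have hps : Finset.univ.filter (fun t => t ⊆ s) = s.powerset := by
            ext t; simp
          rw [hps, ← Finset.sum_mul, sum_pow_card, sub_add_cancel, mul_comm]
      _ = ∑ t : Finset (Fin N), ∑ s : Finset (Fin N),
            (if t ⊆ s then (z - 1) ^ t.card * (P s : ℂ) else 0) := Finset.sum_comm
      _ = ∑ t : Finset (Fin N), (z - 1) ^ t.card *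
            ∑ s ∈ Finset.univ.filter (fun s => t ⊆ s), (P s : ℂ) := by
          refine Finset.sum_congr rfl fun t _ => ?_
          rw [← Finset.sum_filter, ← Finset.mul_sum]
      _ = ∑ t : Finset (Fin N), (z - 1) ^ t.card *
            (K.submatrix (fun i : {x // x ∈ t} => i.1) (fun j : {x // x ∈ t} => j.1)).det := by
          exact Finset.sum_congr rfl fun t _ => by rw [key t]
  · have hspec := hK.spectral_theorem
    have hUU : (hK.eigenvectorUnitary : Matrix (Fin N) (Fin N) ℂ) *
        star (hK.eigenvectorUnitary : Matrix (Fin N) (Fin N) ℂ) = 1 :=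
      (Matrix.mem_unitaryGroup_iff).mp hK.eigenvectorUnitary.2
    have key : (1 : Matrix (Fin N) (Fin N) ℂ) + (z - 1) • K
        = (hK.eigenvectorUnitary : Matrix (Fin N) (Fin N) ℂ) *
            ((1 : Matrix (Fin N) (Fin N) ℂ) +
              (z - 1) • Matrix.diagonal (RCLike.ofReal ∘ hK.eigenvalues)) *
            star (hK.eigenvectorUnitary : Matrix (Fin N) (Fin N) ℂ) := by
      rw [mul_add, mul_one, add_mul, hUU, Matrix.mul_smul, Matrix.smul_mul]
      exact congrArg (fun M => 1 + (z - 1) • M) (hspec.trans (Unitary.conjStarAlgAut_apply _ _))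
    have hdetU : (hK.eigenvectorUnitary : Matrix (Fin N) (Fin N) ℂ).det *
        (star (hK.eigenvectorUnitary : Matrix (Fin N) (Fin N) ℂ)).det = 1 := by
      rw [← Matrix.det_mul, hUU, Matrix.det_one]
    have hdiag : (1 : Matrix (Fin N) (Fin N) ℂ) +
        (z - 1) • Matrix.diagonal (RCLike.ofReal ∘ hK.eigenvalues)
        = Matrix.diagonal (fun i => 1 + (z - 1) * (hK.eigenvalues i : ℂ)) := by
      ext i j
      rcases eq_or_ne i j with h | h
      · subst h
        simp [Matrix.one_apply, Matrix.diagonal_apply_eq]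
      · simp [Matrix.diagonal_apply_ne _ h, Matrix.one_apply_ne h]
    rw [key, Matrix.det_mul, Matrix.det_mul, mul_right_comm, hdetU, one_mul, hdiag,
      Matrix.det_diagonal]
    exact Finset.prod_congr rfl fun i _ => by ring
end

section
/- Let K be an N×N Hermitian matrix and P a determinantal sampling design with kernel K. Then the variance of the sample size satisfies ∑_{s ⊆ U} P(s)·(#s − tr(K))² = tr(K − K²). -/
lemma det_single {N : ℕ} (K : Matrix (Fin N) (Fin N) ℂ) (i : Fin N) :
    (K.submatrix (fun x : {x // x ∈ ({i} : Finset (Fin N))} => x.1)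
      (fun x : {x // x ∈ ({i} : Finset (Fin N))} => x.1)).det = K i i := by
  haveI : Unique {x // x ∈ ({i} : Finset (Fin N))} :=
    ⟨⟨⟨i, Finset.mem_singleton_self i⟩⟩, fun a => Subtype.ext (Finset.mem_singleton.mp a.2)⟩
  have hd : ((default : {x // x ∈ ({i} : Finset (Fin N))}) : Fin N) = i :=
    Finset.mem_singleton.mp (default : {x // x ∈ ({i} : Finset (Fin N))}).2
  rw [Matrix.det_unique, Matrix.submatrix_apply, hd]

lemma det_pair {N : ℕ} (K : Matrix (Fin N) (Fin N) ℂ) (i j : Fin N) (hij : i ≠ j) :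
    (K.submatrix (fun x : {x // x ∈ ({i, j} : Finset (Fin N))} => x.1)
      (fun x : {x // x ∈ ({i, j} : Finset (Fin N))} => x.1)).det
      = K i i * K j j - K i j * K j i := by
  have hi : i ∈ ({i, j} : Finset (Fin N)) := by simp
  have hj : j ∈ ({i, j} : Finset (Fin N)) := by simp
  let e : Fin 2 ≃ {x // x ∈ ({i, j} : Finset (Fin N))} :=
    { toFun := ![⟨i, hi⟩, ⟨j, hj⟩]
      invFun := fun x => if x.1 = i then 0 else 1
      left_inv := by
        intro a
        fin_cases a
        · simp
        · simp [hij.symm]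
      right_inv := by
        rintro ⟨x, hx⟩
        rcases Finset.mem_insert.mp hx with h | h
        · simp [h]
        · have h' := Finset.mem_singleton.mp h
          subst h'
          simp [hij.symm] }
  rw [← Matrix.det_submatrix_equiv_self e]
  rw [Matrix.det_fin_two]
  simp [e, Matrix.submatrix_apply]

/-- **Variance of the sample size of a determinantal sampling design**:
`∑_s P(s)·(#s − tr K)² = tr(K − K²)`. -/
theorem variance_sample_size {N : ℕ} (K : Matrix (Fin N) (Fin N) ℂ) (hK : K.IsHermitian)
    (P : Finset (Fin N) → ℝ) (hpos : ∀ s, 0 ≤ P s) (hsum : ∑ s, P s = 1)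
    (hDSD : IsDSD P K) :
    ((∑ s : Finset (Fin N), P s * ((s.card : ℝ) - (Matrix.trace K).re) ^ 2 : ℝ) : ℂ) =
      Matrix.trace (K - K * K) := by
  set T := Matrix.trace K with hT
  set t : ℝ := T.re with ht
  -- the DSD identity in indicator form
  have hf : ∀ u : Finset (Fin N),
      (∑ s : Finset (Fin N), if u ⊆ s then (P s : ℂ) else 0) =
      (K.submatrix (fun x : {x // x ∈ u} => x.1) (fun x : {x // x ∈ u} => x.1)).det := by
    intro u
    rw [← hDSD u, Finset.sum_filter, Complex.ofReal_sum]
    exact Finset.sum_congr rfl fun s _ => by split <;> simp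
  -- trace K is real
  have hdiagim : ∀ i, (K i i).im = 0 := by
    intro i
    have h := congrArg Complex.im (hK.apply i i)
    simp only [Complex.star_def, Complex.conj_im] at h
    linarith
  have hTreal : (T : ℂ) = (t : ℂ) := by
    have himT : T.im = 0 := by
      rw [hT, Matrix.trace, Complex.im_sum]
      exact Finset.sum_eq_zero fun i _ => hdiagim i
    exact Complex.ext (by simp [ht]) (by simp [himT])
  -- indicator expansion of card
  have hchi : ∀ s : Finset (Fin N), (s.card : ℂ) = ∑ i, (if i ∈ s then (1:ℂ) else 0) := by
    intro s
    rw [Finset.sum_boole]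
    simp [Finset.filter_mem_eq_inter]
  -- first moment
  have hE1 : (∑ s : Finset (Fin N), (P s : ℂ) * (s.card : ℂ)) = T := by
    calc (∑ s : Finset (Fin N), (P s : ℂ) * (s.card : ℂ))
        = ∑ s : Finset (Fin N), ∑ i, (if ({i} : Finset (Fin N)) ⊆ s then (P s : ℂ) else 0) := by
          refine Finset.sum_congr rfl fun s _ => ?_
          rw [hchi s, Finset.mul_sum]
          refine Finset.sum_congr rfl fun i _ => ?_
          by_cases hi : i ∈ s <;> simp [hi, Finset.singleton_subset_iff]
      _ = ∑ i, ∑ s : Finset (Fin N), (if ({i} : Finset (Fin N)) ⊆ s then (P s : ℂ) else 0) :=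
          Finset.sum_comm
      _ = ∑ i, K i i := by
          refine Finset.sum_congr rfl fun i _ => ?_
          rw [hf, det_single]
      _ = T := rfl
  -- pairwise sums
  have hD : ∀ i j : Fin N,
      (∑ s : Finset (Fin N), if ({i, j} : Finset (Fin N)) ⊆ s then (P s : ℂ) else 0)
      = K i i * K j j - K i j * K j i + (if i = j then K i i else 0) := by
    intro i j
    by_cases h : i = j
    · subst h
      have hii : ({i, i} : Finset (Fin N)) = {i} := by simp
      rw [hii, hf, det_single]
      simp
    · rw [hf, det_pair K i j h]
      simp [h]
  -- second moment
  have hE2 : (∑ s : Finset (Fin N), (P s : ℂ) * (s.card : ℂ)^2)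
      = T + T * T - Matrix.trace (K * K) := by
    have h1 : (∑ i, ∑ j, K i i * K j j) = T * T := by
      rw [← Finset.sum_mul_sum]
      rfl
    have h2 : (∑ i, ∑ j, K i j * K j i) = Matrix.trace (K * K) := by
      rw [Matrix.trace]
      exact Finset.sum_congr rfl fun i _ => by rw [Matrix.diag_apply, Matrix.mul_apply]
    have h3 : (∑ i : Fin N, ∑ j : Fin N, (if i = j then K i i else 0)) = T := by
      simp [hT, Matrix.trace]
    calc (∑ s : Finset (Fin N), (P s : ℂ) * (s.card : ℂ)^2)
        = ∑ s : Finset (Fin N), ∑ i, ∑ j,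
            (if ({i, j} : Finset (Fin N)) ⊆ s then (P s : ℂ) else 0) := by
          refine Finset.sum_congr rfl fun s _ => ?_
          rw [sq, hchi s, Finset.sum_mul_sum, Finset.mul_sum]
          refine Finset.sum_congr rfl fun i _ => ?_
          rw [Finset.mul_sum]
          refine Finset.sum_congr rfl fun j _ => ?_
          by_cases hi : i ∈ s <;> by_cases hj : j ∈ s <;>
            simp [hi, hj, Finset.insert_subset_iff]
      _ = ∑ i, ∑ j, ∑ s : Finset (Fin N),
            (if ({i, j} : Finset (Fin N)) ⊆ s then (P s : ℂ) else 0) := by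
          rw [Finset.sum_comm]
          exact Finset.sum_congr rfl fun i _ => Finset.sum_comm
      _ = ∑ i, ∑ j, (K i i * K j j - K i j * K j i + (if i = j then K i i else 0)) :=
          Finset.sum_congr rfl fun i _ => Finset.sum_congr rfl fun j _ => hD i j
      _ = T + T * T - Matrix.trace (K * K) := by
          simp only [Finset.sum_add_distrib, Finset.sum_sub_distrib]
          rw [h1, h2, h3]
          ring
  -- total mass
  have hS0 : (∑ s : Finset (Fin N), (P s : ℂ)) = 1 := by
    rw [← Complex.ofReal_sum, hsum, Complex.ofReal_one]
  -- put it together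
  have hL : ((∑ s : Finset (Fin N), P s * ((s.card : ℝ) - t) ^ 2 : ℝ) : ℂ)
      = (∑ s : Finset (Fin N), (P s : ℂ) * ((s.card : ℂ) - (t:ℂ)) ^ 2) := by
    rw [Complex.ofReal_sum]
    refine Finset.sum_congr rfl fun s _ => ?_
    push_cast
    ring
  rw [hL]
  have expand : ∀ s : Finset (Fin N),
      (P s : ℂ) * ((s.card : ℂ) - (t:ℂ)) ^ 2
      = (P s : ℂ) * (s.card : ℂ)^2 - 2 * (t:ℂ) * ((P s : ℂ) * (s.card : ℂ))
        + (t:ℂ)^2 * (P s : ℂ) := by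
    intro s; ring
  rw [Finset.sum_congr rfl fun s _ => expand s]
  rw [Finset.sum_add_distrib, Finset.sum_sub_distrib, ← Finset.mul_sum, ← Finset.mul_sum,
    hE1, hE2, hS0, Matrix.trace_sub]
  rw [← hTreal]
  ring
end

section
/- Let K be an N×N Hermitian contracting matrix and P a determinantal sampling design with kernel K. Then P is of fixed size (i.e., there exists an integer n such that P(s) = 0 whenever #s ≠ n) if and only if K is a projection matrix (K² = K); and in that case the fixed size is n = tr(K) = rank(K). -/
open Finset Matrix

section Aux

variable {N : ℕ} {P : Finset (Fin N) → ℝ} {K : Matrix (Fin N) (Fin N) ℂ}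

lemma aux_det_single (K : Matrix (Fin N) (Fin N) ℂ) (i : Fin N) :
    (K.submatrix (fun x : {x // x ∈ ({i} : Finset (Fin N))} => x.1)
      (fun x : {x // x ∈ ({i} : Finset (Fin N))} => x.1)).det = K i i := by
  haveI : Unique {x // x ∈ ({i} : Finset (Fin N))} :=
    ⟨⟨⟨i, by simp⟩⟩, by rintro ⟨x, hx⟩; simp only [Finset.mem_singleton] at hx; subst hx; rfl⟩
  rw [Matrix.det_unique]
  have hd : ((default : {x // x ∈ ({i} : Finset (Fin N))}) : Fin N) = i := by
    exact Finset.mem_singleton.mp (default : {x // x ∈ ({i} : Finset (Fin N))}).2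
  simp [Matrix.submatrix_apply, hd]

lemma aux_det_pair (K : Matrix (Fin N) (Fin N) ℂ) (i j : Fin N) (hij : i ≠ j) :
    (K.submatrix (fun x : {x // x ∈ ({i, j} : Finset (Fin N))} => x.1)
      (fun x : {x // x ∈ ({i, j} : Finset (Fin N))} => x.1)).det
      = K i i * K j j - K i j * K j i := by
  have hi : i ∈ ({i, j} : Finset (Fin N)) := by simp
  have hj : j ∈ ({i, j} : Finset (Fin N)) := by simp
  let e : Fin 2 ≃ {x // x ∈ ({i, j} : Finset (Fin N))} :=
    { toFun := ![⟨i, hi⟩, ⟨j, hj⟩]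
      invFun := fun x => if x.1 = i then 0 else 1
      left_inv := by
        intro x
        fin_cases x <;> simp [hij.symm]
      right_inv := by
        rintro ⟨x, hx⟩
        simp only [Finset.mem_insert, Finset.mem_singleton] at hx
        rcases hx with rfl | rfl
        · simp
        · simp [hij.symm] }
  rw [← Matrix.det_submatrix_equiv_self e, Matrix.det_fin_two]
  simp [e, Matrix.submatrix_apply]

lemma aux_moment_one :
    (∑ s : Finset (Fin N), P s * (s.card : ℝ))
      = ∑ i : Fin N, ∑ s ∈ Finset.univ.filter (fun s => i ∈ s), P s := by
  refine Eq.symm ?_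
  calc ∑ i : Fin N, ∑ s ∈ Finset.univ.filter (fun s => i ∈ s), P s
      = ∑ i : Fin N, ∑ s : Finset (Fin N), if i ∈ s then P s else 0 := by
        simp [Finset.sum_filter]
    _ = ∑ s : Finset (Fin N), ∑ i : Fin N, if i ∈ s then P s else 0 := Finset.sum_comm
    _ = ∑ s : Finset (Fin N), P s * (s.card : ℝ) := by
        refine Finset.sum_congr rfl fun s _ => ?_
        simp [Finset.sum_ite_mem, Finset.sum_const, nsmul_eq_mul, mul_comm]

lemma aux_moment_two :
    (∑ s : Finset (Fin N), P s * (s.card : ℝ) ^ 2)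
      = ∑ i : Fin N, ∑ j : Fin N,
          ∑ s ∈ Finset.univ.filter (fun s => i ∈ s ∧ j ∈ s), P s := by
  refine Eq.symm ?_
  calc ∑ i : Fin N, ∑ j : Fin N, ∑ s ∈ Finset.univ.filter (fun s => i ∈ s ∧ j ∈ s), P s
      = ∑ i : Fin N, ∑ j : Fin N, ∑ s : Finset (Fin N),
          if i ∈ s ∧ j ∈ s then P s else 0 := by simp [Finset.sum_filter]
    _ = ∑ i : Fin N, ∑ s : Finset (Fin N), ∑ j : Fin N,
          if i ∈ s ∧ j ∈ s then P s else 0 :=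
        Finset.sum_congr rfl fun i _ => Finset.sum_comm
    _ = ∑ s : Finset (Fin N), ∑ i : Fin N, ∑ j : Fin N,
          if i ∈ s ∧ j ∈ s then P s else 0 := Finset.sum_comm
    _ = ∑ s : Finset (Fin N), P s * (s.card : ℝ) ^ 2 := by
        refine Finset.sum_congr rfl fun s _ => ?_
        simp [ite_and, Finset.sum_ite_mem, Finset.sum_const, nsmul_eq_mul]
        ring

lemma aux_star_mul (hK : K.IsHermitian) :
    star (hK.eigenvectorUnitary : Matrix (Fin N) (Fin N) ℂ)
      * (hK.eigenvectorUnitary : Matrix (Fin N) (Fin N) ℂ) = 1 :=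
  Matrix.mem_unitaryGroup_iff'.mp hK.eigenvectorUnitary.2

lemma aux_mul_star (hK : K.IsHermitian) :
    (hK.eigenvectorUnitary : Matrix (Fin N) (Fin N) ℂ)
      * star (hK.eigenvectorUnitary : Matrix (Fin N) (Fin N) ℂ) = 1 :=
  Matrix.mem_unitaryGroup_iff.mp hK.eigenvectorUnitary.2

lemma aux_trace (hK : K.IsHermitian) :
    K.trace = ∑ i, (hK.eigenvalues i : ℂ) := by
  conv_lhs => rw [hK.spectral_theorem, Unitary.conjStarAlgAut_apply]
  rw [Matrix.trace_mul_cycle, aux_star_mul hK, one_mul, Matrix.trace_diagonal]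
  rfl

lemma aux_KK (hK : K.IsHermitian) :
    K * K = (hK.eigenvectorUnitary : Matrix (Fin N) (Fin N) ℂ)
      * Matrix.diagonal (fun i => (hK.eigenvalues i : ℂ) * (hK.eigenvalues i : ℂ))
      * star (hK.eigenvectorUnitary : Matrix (Fin N) (Fin N) ℂ) := by
  conv_lhs => rw [hK.spectral_theorem, Unitary.conjStarAlgAut_apply]
  set U := (hK.eigenvectorUnitary : Matrix (Fin N) (Fin N) ℂ)
  set D := (Matrix.diagonal (RCLike.ofReal ∘ hK.eigenvalues) : Matrix (Fin N) (Fin N) ℂ) with hD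
  have : U * D * star U * (U * D * star U) = U * (D * ((star U * U) * (D * star U))) := by
    simp only [mul_assoc]
  rw [this, aux_star_mul hK, one_mul, ← mul_assoc D D, hD,
    Matrix.diagonal_mul_diagonal]
  simp only [mul_assoc]
  rfl

lemma aux_traceKK (hK : K.IsHermitian) :
    (K * K).trace = ∑ i, (hK.eigenvalues i : ℂ) * (hK.eigenvalues i : ℂ) := by
  rw [aux_KK hK, Matrix.trace_mul_cycle, aux_star_mul hK, one_mul,
    Matrix.trace_diagonal]

lemma aux_proj_of (hK : K.IsHermitian)
    (h : ∀ i, hK.eigenvalues i * hK.eigenvalues i = hK.eigenvalues i) : K * K = K := by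
  rw [aux_KK hK]
  conv_rhs => rw [hK.spectral_theorem, Unitary.conjStarAlgAut_apply]
  have heq : (fun i => (hK.eigenvalues i : ℂ) * (hK.eigenvalues i : ℂ))
      = RCLike.ofReal ∘ hK.eigenvalues := by
    funext i
    simp only [Function.comp_apply]
    rw [← Complex.ofReal_mul, h i]
    rfl
  rw [heq]

lemma aux_eig_of_proj (hK : K.IsHermitian) (h : K * K = K) :
    ∀ i, hK.eigenvalues i * hK.eigenvalues i = hK.eigenvalues i := by
  intro i
  have h1 : star (hK.eigenvectorUnitary : Matrix (Fin N) (Fin N) ℂ) * K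
      * (hK.eigenvectorUnitary : Matrix (Fin N) (Fin N) ℂ)
      = Matrix.diagonal (RCLike.ofReal ∘ hK.eigenvalues) := by
    have := hK.conjStarAlgAut_star_eigenvectorUnitary
    rwa [Unitary.conjStarAlgAut_star_apply] at this
  set U := (hK.eigenvectorUnitary : Matrix (Fin N) (Fin N) ℂ)
  have h2 : star U * (K * K) * U
      = (star U * K * U) * (star U * K * U) := by
    have : star U * (K * (U * star U) * K) * U = star U * (K * K) * U := by
      rw [aux_mul_star hK, mul_one]
    rw [← this]
    simp only [mul_assoc]
  have h3 : (Matrix.diagonal (RCLike.ofReal ∘ hK.eigenvalues) : Matrix (Fin N) (Fin N) ℂ)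
      * Matrix.diagonal (RCLike.ofReal ∘ hK.eigenvalues)
      = Matrix.diagonal (RCLike.ofReal ∘ hK.eigenvalues) := by
    rw [← h1, ← h2, h, h1]
  rw [Matrix.diagonal_mul_diagonal] at h3
  have h4 := congrFun (congrFun h3 i) i
  simp only [Matrix.diagonal_apply_eq, Pi.mul_apply, Function.comp_apply] at h4
  exact_mod_cast h4

lemma aux_rank_submatrix_le (K : Matrix (Fin N) (Fin N) ℂ) (s : Finset (Fin N)) :
    (K.submatrix (fun i : {x // x ∈ s} => i.1) (fun j : {x // x ∈ s} => j.1)).rank ≤ K.rank := by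
  classical
  let E : Matrix {x // x ∈ s} (Fin N) ℂ :=
    Matrix.of fun x j => if (x : Fin N) = j then 1 else 0
  have heq : K.submatrix (fun i : {x // x ∈ s} => i.1) (fun j : {x // x ∈ s} => j.1)
      = E * K * E.transpose := by
    ext x y
    simp [E, Matrix.mul_apply, Matrix.transpose_apply, ite_mul, mul_ite,
      Finset.sum_ite_eq]
  rw [heq]
  exact le_trans (Matrix.rank_mul_le_left _ _) (Matrix.rank_mul_le_right _ _)

lemma aux_det_zero (K : Matrix (Fin N) (Fin N) ℂ) (s : Finset (Fin N)) (hs : K.rank < s.card) :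
    (K.submatrix (fun i : {x // x ∈ s} => i.1) (fun j : {x // x ∈ s} => j.1)).det = 0 := by
  by_contra hdet
  have hunit : IsUnit (K.submatrix (fun i : {x // x ∈ s} => i.1)
      (fun j : {x // x ∈ s} => j.1)).det := isUnit_iff_ne_zero.mpr hdet
  have h1 := Matrix.rank_of_isUnit _ ((Matrix.isUnit_iff_isUnit_det _).mpr hunit)
  rw [Fintype.card_coe] at h1
  have h2 := aux_rank_submatrix_le K s
  omega

end Aux

/-- **Fixed size determinantal sampling designs are exactly those with projection
kernels.** A determinantal sampling design with Hermitian contracting kernel `K` is of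
fixed size (there is an `n` with `P(s) = 0` whenever `#s ≠ n`) iff `K² = K`; in that
case the fixed size is `n = tr(K) = rank(K)`. -/
theorem fixed_size_iff_projection {N : ℕ} (K : Matrix (Fin N) (Fin N) ℂ)
    (hK : K.IsHermitian) (hcontr : ∀ i, hK.eigenvalues i ∈ Set.Icc (0 : ℝ) 1)
    (P : Finset (Fin N) → ℝ) (hpos : ∀ s, 0 ≤ P s) (hsum : ∑ s, P s = 1)
    (hDSD : IsDSD P K) :
    ((∃ n : ℕ, ∀ s : Finset (Fin N), s.card ≠ n → P s = 0) ↔ K * K = K) ∧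
      (K * K = K →
        Matrix.trace K = (K.rank : ℂ) ∧ ∀ s : Finset (Fin N), P s ≠ 0 → s.card = K.rank) := by
  classical
  have marg1 : ∀ i : Fin N,
      ((∑ s ∈ Finset.univ.filter (fun s => i ∈ s), P s : ℝ) : ℂ) = K i i := by
    intro i
    have h := hDSD {i}
    rw [show Finset.univ.filter (fun s' => ({i} : Finset (Fin N)) ⊆ s')
        = Finset.univ.filter (fun s => i ∈ s) from Finset.filter_congr (by simp)] at h
    rw [h, aux_det_single]
  have marg2 : ∀ i j : Fin N,
      ((∑ s ∈ Finset.univ.filter (fun s => i ∈ s ∧ j ∈ s), P s : ℝ) : ℂ)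
        = K i i * K j j - K i j * K j i + (if i = j then K i i else 0) := by
    intro i j
    by_cases hij : i = j
    · subst hij
      rw [if_pos rfl]
      rw [show Finset.univ.filter (fun s => i ∈ s ∧ i ∈ s)
          = Finset.univ.filter (fun s => i ∈ s) from Finset.filter_congr (by simp)]
      rw [marg1 i]; ring
    · have h := hDSD {i, j}
      rw [show Finset.univ.filter (fun s' => ({i, j} : Finset (Fin N)) ⊆ s')
          = Finset.univ.filter (fun s => i ∈ s ∧ j ∈ s) from
        Finset.filter_congr (by simp [Finset.insert_subset_iff])] at h
      rw [h, aux_det_pair K i j hij, if_neg hij, add_zero]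
  have hm1 : ((∑ s : Finset (Fin N), P s * (s.card : ℝ) : ℝ) : ℂ) = K.trace := by
    rw [aux_moment_one, Complex.ofReal_sum]
    simp only [Matrix.trace, Matrix.diag]
    exact Finset.sum_congr rfl fun i _ => marg1 i
  have hm2 : ((∑ s : Finset (Fin N), P s * (s.card : ℝ) ^ 2 : ℝ) : ℂ)
      = K.trace * K.trace - (K * K).trace + K.trace := by
    rw [aux_moment_two, Complex.ofReal_sum]
    calc ∑ i : Fin N, ((∑ j : Fin N,
            ∑ s ∈ Finset.univ.filter (fun s => i ∈ s ∧ j ∈ s), P s : ℝ) : ℂ)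
        = ∑ i : Fin N, ∑ j : Fin N,
            ((∑ s ∈ Finset.univ.filter (fun s => i ∈ s ∧ j ∈ s), P s : ℝ) : ℂ) := by
          exact Finset.sum_congr rfl fun i _ => Complex.ofReal_sum _ _
      _ = ∑ i : Fin N, ∑ j : Fin N,
            (K i i * K j j - K i j * K j i + (if i = j then K i i else 0)) :=
          Finset.sum_congr rfl fun i _ => Finset.sum_congr rfl fun j _ => marg2 i j
      _ = K.trace * K.trace - (K * K).trace + K.trace := by
          simp only [Finset.sum_add_distrib, Finset.sum_sub_distrib]
          have e1 : ∑ i : Fin N, ∑ j : Fin N, K i i * K j j = K.trace * K.trace := by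
            rw [show K.trace = ∑ i : Fin N, K i i from rfl, Finset.sum_mul_sum]
          have e2 : ∑ i : Fin N, ∑ j : Fin N, K i j * K j i = (K * K).trace := by
            simp only [Matrix.trace, Matrix.diag, Matrix.mul_apply]
          have e3 : ∑ i : Fin N, ∑ j : Fin N, (if i = j then K i i else 0) = K.trace := by
            simp only [Matrix.trace, Matrix.diag]
            refine Finset.sum_congr rfl fun i _ => ?_
            rw [Finset.sum_ite_eq]
            simp
          rw [e1, e2, e3]
  have htr := aux_trace hK
  have htrKK := aux_traceKK hK
  -- forward direction
  have fwd : (∃ n : ℕ, ∀ s : Finset (Fin N), s.card ≠ n → P s = 0) → K * K = K := by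
    rintro ⟨n, hn⟩
    have e1 : (∑ s : Finset (Fin N), P s * (s.card : ℝ)) = (n : ℝ) := by
      have h : ∀ s : Finset (Fin N), P s * (s.card : ℝ) = P s * (n : ℝ) := by
        intro s
        by_cases h : s.card = n
        · rw [h]
        · rw [hn s h]; ring
      rw [Finset.sum_congr rfl fun s _ => h s, ← Finset.sum_mul, hsum, one_mul]
    have e2 : (∑ s : Finset (Fin N), P s * (s.card : ℝ) ^ 2) = (n : ℝ) ^ 2 := by
      have h : ∀ s : Finset (Fin N), P s * (s.card : ℝ) ^ 2 = P s * (n : ℝ) ^ 2 := by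
        intro s
        by_cases h : s.card = n
        · rw [h]
        · rw [hn s h]; ring
      rw [Finset.sum_congr rfl fun s _ => h s, ← Finset.sum_mul, hsum, one_mul]
    have h1 : K.trace = (n : ℂ) := by
      rw [← hm1, e1]; norm_cast
    have hS : (K * K).trace
        = K.trace * K.trace + K.trace
          - ((∑ s : Finset (Fin N), P s * (s.card : ℝ) ^ 2 : ℝ) : ℂ) := by
      rw [hm2]; ring
    rw [e2, h1] at hS
    have h2 : (K * K).trace = K.trace := by
      rw [hS, h1]; push_cast; ring
    rw [htr, htrKK] at h2
    have hreal : ∑ i, hK.eigenvalues i * hK.eigenvalues i = ∑ i, hK.eigenvalues i := by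
      exact_mod_cast h2
    have hzero : ∑ i, hK.eigenvalues i * (1 - hK.eigenvalues i) = 0 := by
      simp only [mul_sub, mul_one]
      rw [Finset.sum_sub_distrib, hreal, sub_self]
    have heach := (Finset.sum_eq_zero_iff_of_nonneg (fun i _ =>
      mul_nonneg (hcontr i).1 (by linarith [(hcontr i).2]))).mp hzero
    apply aux_proj_of hK
    intro i
    have h := heach i (Finset.mem_univ i)
    rcases mul_eq_zero.mp h with h' | h'
    · rw [h']; ring
    · have : hK.eigenvalues i = 1 := by linarith
      rw [this]; ring
  -- consequences of being a projection
  have key : K * K = K →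
      Matrix.trace K = (K.rank : ℂ) ∧ ∀ s : Finset (Fin N), P s ≠ 0 → s.card = K.rank := by
    intro hproj
    have h01 : ∀ i, hK.eigenvalues i = 0 ∨ hK.eigenvalues i = 1 := by
      intro i
      have h := aux_eig_of_proj hK hproj i
      have h' : hK.eigenvalues i * (hK.eigenvalues i - 1) = 0 := by
        nlinarith [h]
      rcases mul_eq_zero.mp h' with h'' | h''
      · exact Or.inl h''
      · exact Or.inr (by linarith)
    have htrace_rank : Matrix.trace K = (K.rank : ℂ) := by
      rw [htr, hK.rank_eq_card_non_zero_eigs, Fintype.card_subtype, Finset.card_filter]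
      push_cast
      refine Finset.sum_congr rfl fun i _ => ?_
      rcases h01 i with h | h
      · simp [h]
      · rw [h]; norm_num
    have hub : ∀ s : Finset (Fin N), K.rank < s.card → P s = 0 := by
      intro s hs
      have h := hDSD s
      rw [aux_det_zero K s hs] at h
      have h0 : (∑ s' ∈ Finset.univ.filter (fun s' => s ⊆ s'), P s') = 0 := by
        exact_mod_cast h
      exact (Finset.sum_eq_zero_iff_of_nonneg (fun t _ => hpos t)).mp h0 s
        (by simp)
    refine ⟨htrace_rank, ?_⟩
    have hm1' : (∑ s : Finset (Fin N), P s * (s.card : ℝ)) = (K.rank : ℝ) := by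
      have h : ((∑ s : Finset (Fin N), P s * (s.card : ℝ) : ℝ) : ℂ) = ((K.rank : ℝ) : ℂ) := by
        rw [hm1, htrace_rank]; norm_cast
      exact_mod_cast h
    have hzero : ∑ s : Finset (Fin N), P s * ((K.rank : ℝ) - (s.card : ℝ)) = 0 := by
      simp only [mul_sub]
      rw [Finset.sum_sub_distrib, hm1', ← Finset.sum_mul, hsum, one_mul, sub_self]
    have hnonneg : ∀ s ∈ Finset.univ (α := Finset (Fin N)),
        0 ≤ P s * ((K.rank : ℝ) - (s.card : ℝ)) := by
      intro s _
      by_cases h : P s = 0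
      · simp [h]
      · have hc : s.card ≤ K.rank := by
          by_contra hlt
          exact h (hub s (by omega))
        have : (s.card : ℝ) ≤ (K.rank : ℝ) := by exact_mod_cast hc
        exact mul_nonneg (hpos s) (by linarith)
    have heach := (Finset.sum_eq_zero_iff_of_nonneg hnonneg).mp hzero
    intro s hs
    have h := heach s (Finset.mem_univ s)
    rcases mul_eq_zero.mp h with h' | h'
    · exact absurd h' hs
    · have : (s.card : ℝ) = (K.rank : ℝ) := by linarith
      exact_mod_cast this
  refine ⟨⟨fwd, fun h => ⟨K.rank, fun s hs => ?_⟩⟩, key⟩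
  by_contra hP
  exact hs ((key h).2 s hP)
end

section
/- Let K be an N×N Hermitian matrix and P a determinantal sampling design with kernel K. Define the complementary design P^c by P^c(s) = P(U ∖ s) for every s ⊆ U. Then P^c is a determinantal sampling design with kernel I_N − K, i.e., for every s ⊆ U, ∑_{s' ⊇ s} P^c(s') = det((I_N − K)_{|s}). -/
open Finset Matrix

/-- Sign sum over a powerset, real-valued version. -/
lemma aux_sum_powerset_neg_one {α : Type*} [DecidableEq α] (x : Finset α) :
    (∑ m ∈ x.powerset, (-1 : ℝ) ^ m.card) = if x = ∅ then 1 else 0 := by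
  have h := Finset.sum_powerset_neg_one_pow_card (x := x)
  calc (∑ m ∈ x.powerset, (-1 : ℝ) ^ m.card)
      = ((∑ m ∈ x.powerset, (-1 : ℤ) ^ m.card : ℤ) : ℝ) := by push_cast; rfl
    _ = _ := by rw [h]; split_ifs <;> simp

/-- Inclusion–exclusion: the complementary design's inclusion probabilities. -/
lemma aux_incl_excl {N : ℕ} (P : Finset (Fin N) → ℝ) (s : Finset (Fin N)) :
    ∑ s' ∈ Finset.univ.filter (fun s' => s ⊆ s'), P s'ᶜ
      = ∑ r ∈ s.powerset, (-1 : ℝ) ^ r.card *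
          ∑ t ∈ Finset.univ.filter (fun t => r ⊆ t), P t := by
  have rhs : ∑ r ∈ s.powerset, (-1 : ℝ) ^ r.card *
          ∑ t ∈ Finset.univ.filter (fun t => r ⊆ t), P t
      = ∑ t : Finset (Fin N), (if s ∩ t = ∅ then (1 : ℝ) else 0) * P t := by
    simp_rw [Finset.sum_filter, Finset.mul_sum]
    rw [Finset.sum_comm]
    refine Finset.sum_congr rfl fun t _ => ?_
    have h1 : ∀ r ∈ s.powerset, (-1 : ℝ) ^ r.card * (if r ⊆ t then P t else 0)
        = if r ⊆ t then (-1 : ℝ) ^ r.card * P t else 0 := by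
      intro r _; split_ifs <;> simp
    rw [Finset.sum_congr rfl h1, ← Finset.sum_filter, ← Finset.sum_mul]
    congr 1
    have hset : s.powerset.filter (fun r => r ⊆ t) = (s ∩ t).powerset := by
      ext r
      rw [Finset.mem_filter, Finset.mem_powerset, Finset.mem_powerset,
        Finset.subset_inter_iff]
    rw [hset, aux_sum_powerset_neg_one]
  rw [rhs]
  simp_rw [ite_mul, one_mul, zero_mul, ← Finset.sum_filter]
  refine Finset.sum_nbij' (fun s' => s'ᶜ) (fun t => tᶜ) ?_ ?_ ?_ ?_ ?_
  · intro a ha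
    rw [Finset.mem_filter] at ha
    rw [Finset.mem_filter]
    refine ⟨Finset.mem_univ _, ?_⟩
    ext x
    simp only [Finset.mem_inter, Finset.mem_compl, Finset.notMem_empty, iff_false]
    rintro ⟨hxs, hxa⟩
    exact hxa (ha.2 hxs)
  · intro t ht
    rw [Finset.mem_filter] at ht
    rw [Finset.mem_filter]
    refine ⟨Finset.mem_univ _, fun x hx => ?_⟩
    rw [Finset.mem_compl]
    intro hxt
    have : x ∈ s ∩ t := Finset.mem_inter.2 ⟨hx, hxt⟩
    rw [ht.2] at this
    exact absurd this (Finset.notMem_empty x)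
  · intro a _; exact compl_compl a
  · intro a _; exact compl_compl a
  · intro a _; rfl

/-- Equivalence between a finset of a subtype and its image under the subtype embedding. -/
def aux_mapSubtypeEquiv {α : Type*} {p : α → Prop} [DecidablePred p]
    (t : Finset {x // p x}) :
    {x : {y // p y} // x ∈ t} ≃ {x : α // x ∈ t.map (Function.Embedding.subtype p)} where
  toFun x := ⟨x.1.1, Finset.mem_map_of_mem _ x.2⟩
  invFun x := by
    refine ⟨⟨x.1, t.property_of_mem_map_subtype x.2⟩, ?_⟩
    obtain ⟨b, hb, hbx⟩ := Finset.mem_map.1 x.2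
    have hb' : b = ⟨x.1, t.property_of_mem_map_subtype x.2⟩ := Subtype.ext hbx
    exact hb' ▸ hb
  left_inv x := by ext; rfl
  right_inv x := by ext; rfl

/-- Iterated principal submatrix as a single principal submatrix. -/
lemma aux_det_double {N : ℕ} (K : Matrix (Fin N) (Fin N) ℂ) {s : Finset (Fin N)}
    (t : Finset {x // x ∈ s}) :
    ((K.submatrix (fun i : {x // x ∈ s} => i.1) (fun j : {x // x ∈ s} => j.1)).submatrix
        (fun i : {x // x ∈ t} => i.1) (fun j : {x // x ∈ t} => j.1)).det
      = (K.submatrix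
          (fun i : {x // x ∈ t.map (Function.Embedding.subtype (· ∈ s))} => i.1)
          (fun j : {x // x ∈ t.map (Function.Embedding.subtype (· ∈ s))} => j.1)).det := by
  rw [← Matrix.det_submatrix_equiv_self (aux_mapSubtypeEquiv t)]
  rfl

/-- Determinant of a row-piecewise mixture of the identity with `M`. -/
lemma aux_det_piecewise {n : Type*} [Fintype n] [DecidableEq n]
    (M : Matrix n n ℂ) (s : Finset n) :
    Matrix.det (Matrix.of (s.piecewise (1 : Matrix n n ℂ) M)) =
      (M.submatrix (fun i : {x // x ∈ sᶜ} => i.1) (fun j : {x // x ∈ sᶜ} => j.1)).det := by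
  classical
  set e : {x // x ∈ sᶜ} ⊕ {x // ¬ x ∈ sᶜ} ≃ n := Equiv.sumCompl (· ∈ sᶜ)
  rw [← Matrix.det_submatrix_equiv_self e]
  have hB : (Matrix.of (s.piecewise (1 : Matrix n n ℂ) M)).submatrix e e =
      Matrix.fromBlocks
        (M.submatrix (fun i : {x // x ∈ sᶜ} => i.1) (fun j : {x // x ∈ sᶜ} => j.1))
        (M.submatrix (fun i : {x // x ∈ sᶜ} => i.1) (fun j : {x // ¬ x ∈ sᶜ} => j.1))
        0 1 := by
    ext i j
    cases i with
    | inl i =>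
      have hi : (i.1 : n) ∉ s := Finset.mem_compl.1 i.2
      cases j with
      | inl j => simp [e, Finset.piecewise, hi]
      | inr j => simp [e, Finset.piecewise, hi]
    | inr i =>
      have hi : (i.1 : n) ∈ s := by
        have h2 := i.2; rw [Finset.mem_compl, not_not] at h2; exact h2
      cases j with
      | inl j =>
        have hj : (j.1 : n) ∉ s := Finset.mem_compl.1 j.2
        have hne : (i.1 : n) ≠ j.1 := fun h => hj (h ▸ hi)
        simp [e, Finset.piecewise, hi, Matrix.one_apply, hne]
      | inr j =>
        simp [e, Finset.piecewise, hi, Matrix.one_apply,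
          Subtype.ext_iff]
  rw [hB, Matrix.det_fromBlocks_zero₂₁, Matrix.det_one, mul_one]

/-- Expansion of `det (1 - M)` as a signed sum of principal minors. -/
lemma aux_det_one_sub {n : Type*} [Fintype n] [DecidableEq n] (M : Matrix n n ℂ) :
    (1 - M).det = ∑ t : Finset n, (-1 : ℂ) ^ t.card *
      (M.submatrix (fun i : {x // x ∈ t} => i.1) (fun j : {x // x ∈ t} => j.1)).det := by
  classical
  have h0 : (1 - M).det
      = (Matrix.detRowAlternating : (n → ℂ) [⋀^n]→ₗ[ℂ] ℂ).toMultilinearMap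
          ((1 : Matrix n n ℂ) + (-M)) := by
    rw [sub_eq_add_neg]; rfl
  rw [h0]; refine (MultilinearMap.map_add_univ _ _ _).trans ?_
  have h1 : ∀ s : Finset n,
      (Matrix.detRowAlternating : (n → ℂ) [⋀^n]→ₗ[ℂ] ℂ).toMultilinearMap
          (s.piecewise (1 : Matrix n n ℂ) (-M))
        = (-1 : ℂ) ^ sᶜ.card *
          (M.submatrix (fun i : {x // x ∈ sᶜ} => i.1) (fun j : {x // x ∈ sᶜ} => j.1)).det := by
    intro s
    have h2 : (Matrix.detRowAlternating : (n → ℂ) [⋀^n]→ₗ[ℂ] ℂ).toMultilinearMap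
          (s.piecewise (1 : Matrix n n ℂ) (-M))
        = Matrix.det (Matrix.of (s.piecewise (1 : Matrix n n ℂ) (-M))) := rfl
    rw [h2, aux_det_piecewise]
    have hsub : (-M).submatrix (fun i : {x // x ∈ sᶜ} => i.1) (fun j : {x // x ∈ sᶜ} => j.1)
        = -(M.submatrix (fun i : {x // x ∈ sᶜ} => i.1) (fun j : {x // x ∈ sᶜ} => j.1)) := rfl
    rw [hsub, Matrix.det_neg, Fintype.card_coe]
  rw [Finset.sum_congr rfl fun s _ => h1 s]
  exact Fintype.sum_bijective (fun s : Finset n => sᶜ) compl_involutive.bijective _ _ fun s => rfl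

/-- **Complementary design.** If `P` is a determinantal sampling design with Hermitian
kernel `K`, then the complementary design `P^c(s) = P(U ∖ s)` is a determinantal
sampling design with kernel `I_N − K`: for every `s`,
`∑_{s' ⊇ s} P^c(s') = det((I_N − K)_{|s})`. -/
theorem complementary_design {N : ℕ} (K : Matrix (Fin N) (Fin N) ℂ) (hK : K.IsHermitian)
    (P : Finset (Fin N) → ℝ) (hpos : ∀ s, 0 ≤ P s) (hsum : ∑ s, P s = 1)
    (hDSD : IsDSD P K) :
    IsDSD (fun s => P sᶜ) (1 - K) := by
  intro s
  -- Left side: inclusion-exclusion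
  have hL : ((∑ s' ∈ Finset.univ.filter (fun s' => s ⊆ s'), P s'ᶜ : ℝ) : ℂ)
      = ∑ r ∈ s.powerset, (-1 : ℂ) ^ r.card *
          (K.submatrix (fun i : {x // x ∈ r} => i.1) (fun j : {x // x ∈ r} => j.1)).det := by
    rw [aux_incl_excl P s]
    push_cast
    refine Finset.sum_congr rfl fun r _ => ?_
    have h := hDSD r
    push_cast at h
    rw [h]
  -- Right side: the submatrix of `1 - K` is `1` minus the submatrix of `K`
  have hsub1 : (1 - K).submatrix (fun i : {x // x ∈ s} => i.1) (fun j : {x // x ∈ s} => j.1)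
      = 1 - K.submatrix (fun i : {x // x ∈ s} => i.1) (fun j : {x // x ∈ s} => j.1) := by
    ext i j
    simp only [Matrix.one_apply, Matrix.sub_apply, Matrix.submatrix_apply, Subtype.ext_iff]
  show ((∑ s' ∈ Finset.univ.filter (fun s' => s ⊆ s'), P s'ᶜ : ℝ) : ℂ) = _
  rw [hL, hsub1, aux_det_one_sub]
  refine (Finset.sum_nbij' (fun t : Finset {x // x ∈ s} => t.map (Function.Embedding.subtype _))
      (fun r => r.subtype (· ∈ s)) ?_ ?_ ?_ ?_ ?_).symm
  · intro t _
    rw [Finset.mem_powerset]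
    intro x hx
    exact t.property_of_mem_map_subtype hx
  · intro r _; exact Finset.mem_univ _
  · intro t _
    ext x
    simp only [Finset.mem_subtype, Finset.mem_map, Function.Embedding.coe_subtype]
    constructor
    · rintro ⟨b, hb, hbx⟩
      exact (Subtype.ext hbx : b = x) ▸ hb
    · intro hx
      exact ⟨x, hx, rfl⟩
  · intro r hr
    exact Finset.subtype_map_of_mem fun x hx => Finset.mem_powerset.1 hr hx
  · intro t _
    rw [Finset.card_map, aux_det_double]
end

section
/- Let K be an N×N Hermitian matrix, P a determinantal sampling design with kernel K, and let y = (y_1,…,y_N) and w = (w_1,…,w_N) be real vectors. Set t_y = ∑_{k∈U} y_k and, for s ⊆ U, t̂_{yw}(s) = ∑_{k∈s} w_k y_k. Then the mean square error satisfies ∑_{s ⊆ U} P(s)·(t̂_{yw}(s) − t_y)² = ∑_{k∈U} (w_k y_k)² K_{kk}(1 − K_{kk}) − ∑_{k≠l} w_k y_k w_l y_l |K_{kl}|² + ( ∑_{k∈U} (w_k K_{kk} − 1) y_k )². -/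
lemma diag_real {N : ℕ} (K : Matrix (Fin N) (Fin N) ℂ) (hK : K.IsHermitian) (k : Fin N) :
    ((K k k).re : ℂ) = K k k :=
  Complex.conj_eq_iff_re.mp (by exact hK.apply k k)

lemma pi1 {N : ℕ} (K : Matrix (Fin N) (Fin N) ℂ) (hK : K.IsHermitian)
    (P : Finset (Fin N) → ℝ) (hDSD : IsDSD P K) (k : Fin N) :
    ∑ s ∈ Finset.univ.filter (fun s => k ∈ s), P s = (K k k).re := by
  have h := hDSD {k}
  letI : Unique {x // x ∈ ({k} : Finset (Fin N))} :=
    ⟨⟨⟨k, Finset.mem_singleton_self k⟩⟩, fun x => Subtype.ext (Finset.mem_singleton.mp x.2)⟩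
  have hdet : (K.submatrix (fun i : {x // x ∈ ({k} : Finset (Fin N))} => i.1)
      (fun j : {x // x ∈ ({k} : Finset (Fin N))} => j.1)).det = K k k := by
    rw [Matrix.det_unique]; rfl
  rw [hdet, ← diag_real K hK k] at h
  simp only [Finset.singleton_subset_iff] at h
  exact_mod_cast h

lemma pi2 {N : ℕ} (K : Matrix (Fin N) (Fin N) ℂ) (hK : K.IsHermitian)
    (P : Finset (Fin N) → ℝ) (hDSD : IsDSD P K) (k l : Fin N) (hkl : k ≠ l) :
    ∑ s ∈ Finset.univ.filter (fun s => k ∈ s ∧ l ∈ s), P s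
      = (K k k).re * (K l l).re - ‖K k l‖ ^ 2 := by
  have h := hDSD {k, l}
  have hk : k ∈ ({k, l} : Finset (Fin N)) := by simp
  have hl : l ∈ ({k, l} : Finset (Fin N)) := by simp
  let e : Fin 2 ≃ {x // x ∈ ({k, l} : Finset (Fin N))} :=
    { toFun := fun i => if i = 0 then ⟨k, hk⟩ else ⟨l, hl⟩
      invFun := fun x => if x.1 = k then 0 else 1
      left_inv := by
        intro i
        fin_cases i <;> simp [hkl.symm]
      right_inv := by
        rintro ⟨x, hx⟩
        rcases Finset.mem_insert.mp hx with h1 | h1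
        · simp [h1]
        · have h1 := Finset.mem_singleton.mp h1
          subst h1
          simp [hkl.symm] }
  have hdet : (K.submatrix (fun i : {x // x ∈ ({k, l} : Finset (Fin N))} => i.1)
      (fun j : {x // x ∈ ({k, l} : Finset (Fin N))} => j.1)).det
      = K k k * K l l - K k l * K l k := by
    rw [← Matrix.det_submatrix_equiv_self e]
    have heq : ((K.submatrix (fun i : {x // x ∈ ({k, l} : Finset (Fin N))} => i.1)
        (fun j : {x // x ∈ ({k, l} : Finset (Fin N))} => j.1)).submatrix e e)
        = !![K k k, K k l; K l k, K l l] := by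
      ext i j
      fin_cases i <;> fin_cases j <;> simp [e, Matrix.submatrix]
    rw [heq, Matrix.det_fin_two_of]
  rw [hdet] at h
  have habs : K k l * K l k = ((‖K k l‖ ^ 2 : ℝ) : ℂ) := by
    rw [show K l k = (starRingEnd ℂ) (K k l) from (hK.apply l k).symm,
      Complex.mul_conj, Complex.normSq_eq_norm_sq]
  rw [habs, ← diag_real K hK k, ← diag_real K hK l] at h
  have hfilter : (Finset.univ.filter (fun s' => ({k, l} : Finset (Fin N)) ⊆ s'))
      = Finset.univ.filter (fun s => k ∈ s ∧ l ∈ s) := by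
    apply Finset.filter_congr
    intro s _
    simp [Finset.insert_subset_iff]
  rw [hfilter] at h
  exact_mod_cast h

/-- **Mean square error of a homogeneous linear estimator under a determinantal
sampling design.** With `t̂_{yw}(s) = ∑_{k∈s} w_k y_k` and `t_y = ∑_k y_k`,
`MSE = ∑_k (w_k y_k)² K_{kk}(1−K_{kk}) − ∑_{k≠l} w_k y_k w_l y_l |K_{kl}|²
      + (∑_k (w_k K_{kk} − 1) y_k)²`. -/
theorem mse_linear_estimator {N : ℕ} (K : Matrix (Fin N) (Fin N) ℂ) (hK : K.IsHermitian)
    (P : Finset (Fin N) → ℝ) (hpos : ∀ s, 0 ≤ P s) (hsum : ∑ s, P s = 1)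
    (hDSD : IsDSD P K) (y w : Fin N → ℝ) :
    (∑ s : Finset (Fin N), P s * ((∑ k ∈ s, w k * y k) - ∑ k, y k) ^ 2) =
      (∑ k, (w k * y k) ^ 2 * ((K k k).re * (1 - (K k k).re)))
        - (∑ k, ∑ l ∈ Finset.univ.erase k,
            (w k * y k) * (w l * y l) * ‖K k l‖ ^ 2)
        + (∑ k, (w k * (K k k).re - 1) * y k) ^ 2 := by
  classical
  set a : Fin N → ℝ := fun k => w k * y k with ha
  set π : Fin N → ℝ := fun k => (K k k).re with hπ
  set q : Fin N → Fin N → ℝ := fun k l => ‖K k l‖ ^ 2 with hq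
  set t : ℝ := ∑ k, y k with ht
  set S : ℝ := ∑ k, a k * π k with hS
  set π2 : Fin N → Fin N → ℝ :=
    fun k l => ∑ s ∈ Finset.univ.filter (fun s => k ∈ s ∧ l ∈ s), P s with hπ2
  -- Step 2 : first-order
  have hB : ∑ s, P s * (∑ k ∈ s, a k) = S := by
    have hs : ∀ s : Finset (Fin N),
        P s * (∑ k ∈ s, a k) = ∑ k, (if k ∈ s then P s * a k else 0) := by
      intro s
      calc P s * ∑ k ∈ s, a k = ∑ k ∈ s, P s * a k := Finset.mul_sum _ _ _
        _ = ∑ k ∈ Finset.univ ∩ s, P s * a k := by rw [Finset.univ_inter]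
        _ = ∑ k, if k ∈ s then P s * a k else 0 := (Finset.sum_ite_mem _ _ _).symm
    simp_rw [hs]
    rw [Finset.sum_comm, hS]
    refine Finset.sum_congr rfl fun k _ => ?_
    have : ∀ s : Finset (Fin N), (if k ∈ s then P s * a k else 0)
        = (if k ∈ s then P s else 0) * a k := by
      intro s; split <;> simp
    simp_rw [this, ← Finset.sum_mul, ← Finset.sum_filter, pi1 K hK P hDSD k]
    ring
  -- Step 3 : second-order
  have hA : ∑ s, P s * (∑ k ∈ s, a k) ^ 2 = ∑ k, ∑ l, (a k * a l) * π2 k l := by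
    have hs : ∀ s : Finset (Fin N), P s * (∑ k ∈ s, a k) ^ 2
        = ∑ k, ∑ l, (if k ∈ s ∧ l ∈ s then P s * (a k * a l) else 0) := by
      intro s
      rw [sq, Finset.sum_mul_sum, Finset.mul_sum]
      calc ∑ k ∈ s, P s * ∑ l ∈ s, a k * a l
          = ∑ k ∈ Finset.univ ∩ s, (P s * ∑ l ∈ s, a k * a l) := by rw [Finset.univ_inter]
        _ = ∑ k, if k ∈ s then P s * ∑ l ∈ s, a k * a l else 0 :=
            (Finset.sum_ite_mem _ _ _).symm
        _ = ∑ k, ∑ l, (if k ∈ s ∧ l ∈ s then P s * (a k * a l) else 0) := by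
            refine Finset.sum_congr rfl fun k _ => ?_
            by_cases hk : k ∈ s
            · simp only [hk, if_true, true_and, Finset.mul_sum]
              calc ∑ l ∈ s, P s * (a k * a l)
                  = ∑ l ∈ Finset.univ ∩ s, P s * (a k * a l) := by rw [Finset.univ_inter]
                _ = ∑ l, if l ∈ s then P s * (a k * a l) else 0 :=
                    (Finset.sum_ite_mem _ _ _).symm
            · simp [hk]
    simp_rw [hs]
    rw [Finset.sum_comm]
    refine Finset.sum_congr rfl fun k _ => ?_
    rw [Finset.sum_comm]
    refine Finset.sum_congr rfl fun l _ => ?_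
    have : ∀ s : Finset (Fin N), (if k ∈ s ∧ l ∈ s then P s * (a k * a l) else 0)
        = (if k ∈ s ∧ l ∈ s then P s else 0) * (a k * a l) := by
      intro s; split <;> simp
    simp_rw [this, ← Finset.sum_mul, ← Finset.sum_filter, hπ2]
    ring
  -- diagonal values
  have hdiag : ∀ k, π2 k k = π k := by
    intro k
    rw [hπ2]
    simp only [and_self]
    exact pi1 K hK P hDSD k
  have hoff : ∀ k l, l ≠ k → π2 k l = π k * π l - q k l := by
    intro k l hlk
    exact pi2 K hK P hDSD k l (fun h => hlk h.symm)
  -- Claim C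
  have hC : ∑ k, ∑ l, (a k * a l) * π2 k l
      = (∑ k, a k ^ 2 * (π k * (1 - π k)))
        - (∑ k, ∑ l ∈ Finset.univ.erase k, (a k * a l) * q k l) + S ^ 2 := by
    have hSsq : S ^ 2 = ∑ k, ((a k * π k) * S) := by
      rw [hS, sq, Finset.sum_mul]
    rw [hSsq, ← Finset.sum_sub_distrib, ← Finset.sum_add_distrib]
    refine Finset.sum_congr rfl fun k _ => ?_
    have hsplit : ∑ l, (a k * a l) * π2 k l
        = (a k * a k) * π2 k k + ∑ l ∈ Finset.univ.erase k, (a k * a l) * π2 k l :=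
      (Finset.add_sum_erase _ _ (Finset.mem_univ k)).symm
    have hS2 : (a k * π k) * S
        = (a k * π k) * (a k * π k) + ∑ l ∈ Finset.univ.erase k, (a k * π k) * (a l * π l) := by
      rw [hS, Finset.mul_sum]
      exact (Finset.add_sum_erase _ _ (Finset.mem_univ k)).symm
    rw [hsplit, hdiag k, hS2]
    have hrw : ∀ l ∈ Finset.univ.erase k,
        (a k * a l) * π2 k l = (a k * π k) * (a l * π l) - (a k * a l) * q k l := by
      intro l hl
      rw [hoff k l (Finset.ne_of_mem_erase hl)]
      ring
    rw [Finset.sum_congr rfl hrw, Finset.sum_sub_distrib]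
    ring
  -- Step 1 : expand the square
  have hexp : ∀ s : Finset (Fin N), P s * ((∑ k ∈ s, a k) - t) ^ 2
      = P s * (∑ k ∈ s, a k) ^ 2 - 2 * t * (P s * (∑ k ∈ s, a k)) + t ^ 2 * P s := by
    intro s; ring
  calc ∑ s : Finset (Fin N), P s * ((∑ k ∈ s, a k) - t) ^ 2
      = ∑ s : Finset (Fin N), (P s * (∑ k ∈ s, a k) ^ 2
          - 2 * t * (P s * (∑ k ∈ s, a k)) + t ^ 2 * P s) := Finset.sum_congr rfl fun s _ => hexp s
    _ = (∑ s, P s * (∑ k ∈ s, a k) ^ 2) - 2 * t * (∑ s, P s * (∑ k ∈ s, a k))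
          + t ^ 2 * (∑ s, P s) := by
        rw [Finset.sum_add_distrib, Finset.sum_sub_distrib, ← Finset.mul_sum, ← Finset.mul_sum]
    _ = ((∑ k, a k ^ 2 * (π k * (1 - π k)))
          - (∑ k, ∑ l ∈ Finset.univ.erase k, (a k * a l) * q k l) + S ^ 2)
          - 2 * t * S + t ^ 2 := by rw [hA, hC, hB, hsum, mul_one]
    _ = (∑ k, a k ^ 2 * (π k * (1 - π k)))
          - (∑ k, ∑ l ∈ Finset.univ.erase k, (a k * a l) * q k l)
          + (S - t) ^ 2 := by ring
    _ = _ := by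
        have hlast : ∑ k, (w k * π k - 1) * y k = S - t := by
          rw [hS, ht, ← Finset.sum_sub_distrib]
          exact Finset.sum_congr rfl fun k _ => by rw [ha]; ring
        rw [← hlast]
end

section
/- Let 0 < n < N be integers, K an N×N Hermitian contracting matrix, and P a determinantal sampling design with kernel K. Then P is (N,n)-simple (i.e., π_k = K_{kk} = n/N for all k and π_{kl} = K_{kk}K_{ll} − |K_{kl}|² = n(n−1)/(N(N−1)) for all k ≠ l) if and only if there exists an n×N complex matrix F with columns f_1,…,f_N satisfying: ‖f_k‖ = 1 for all k; |f̄_k^T f_l| = √((N−n)/(n(N−1))) for all k ≠ l; F F̄^T = (N/n) I_n (i.e., F is an equiangular tight frame of ℂ^n); and K = (n/N) F̄^T F. -/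
/-- First order inclusion probability of the sampling design `P`. -/
def incl1 {N : ℕ} (P : Finset (Fin N) → ℝ) (k : Fin N) : ℝ :=
  ∑ s ∈ Finset.univ.filter (fun s => k ∈ s), P s

/-- Second order inclusion probability of the sampling design `P`. -/
def incl2 {N : ℕ} (P : Finset (Fin N) → ℝ) (k l : Fin N) : ℝ :=
  ∑ s ∈ Finset.univ.filter (fun s => k ∈ s ∧ l ∈ s), P s

private lemma tr_aux1 {N : ℕ} (V : Matrix (Fin N) (Fin N) ℂ) (hV : star V * V = 1)
    (d : Fin N → ℂ) : (V * Matrix.diagonal d * star V).trace = ∑ i, d i := by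
  simp only [Matrix.mul_assoc]
  rw [Matrix.trace_mul_comm]
  simp only [Matrix.mul_assoc]
  rw [hV]
  simp [Matrix.trace_diagonal]

private lemma tr_aux2 {N : ℕ} (V : Matrix (Fin N) (Fin N) ℂ) (hV : star V * V = 1)
    (d : Fin N → ℂ) :
    ((V * Matrix.diagonal d * star V) * (V * Matrix.diagonal d * star V)).trace
      = ∑ i, (d i) ^ 2 := by
  have key : ∀ X : Matrix (Fin N) (Fin N) ℂ, star V * (V * X) = X := fun X => by
    rw [← Matrix.mul_assoc, hV, Matrix.one_mul]
  simp only [Matrix.mul_assoc]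
  rw [key, Matrix.trace_mul_comm]
  simp only [Matrix.mul_assoc]
  rw [hV]
  simp [Matrix.diagonal_mul_diagonal, Matrix.trace_diagonal, sq]

set_option maxHeartbeats 1600000 in
/-- **(N,n)-simple determinantal sampling designs are exactly those whose kernel comes
from an equiangular tight frame of ℂⁿ.** -/
theorem simple_iff_etf (N n : ℕ) (hn : 0 < n) (hnN : n < N)
    (K : Matrix (Fin N) (Fin N) ℂ) (hK : K.IsHermitian)
    (hcontr : ∀ i, hK.eigenvalues i ∈ Set.Icc (0 : ℝ) 1)
    (P : Finset (Fin N) → ℝ) (hpos : ∀ s, 0 ≤ P s) (hsum : ∑ s, P s = 1)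
    (hDSD : IsDSD P K) :
    ((∀ k, incl1 P k = (n : ℝ) / N ∧ K k k = (n : ℂ) / N) ∧
      (∀ k l, k ≠ l →
        incl2 P k l = (n : ℝ) * ((n : ℝ) - 1) / ((N : ℝ) * ((N : ℝ) - 1)) ∧
        K k k * K l l - (‖K k l‖ : ℂ) ^ 2 =
          (((n : ℝ) * ((n : ℝ) - 1) / ((N : ℝ) * ((N : ℝ) - 1)) : ℝ) : ℂ))) ↔
    (∃ F : Matrix (Fin n) (Fin N) ℂ,
      (∀ k, ∑ j, ‖F j k‖ ^ 2 = 1) ∧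
      (∀ k l, k ≠ l →
        ‖∑ j, (starRingEnd ℂ) (F j k) * F j l‖ =
          Real.sqrt (((N : ℝ) - n) / ((n : ℝ) * ((N : ℝ) - 1)))) ∧
      F * F.conjTranspose = ((N : ℂ) / n) • (1 : Matrix (Fin n) (Fin n) ℂ) ∧
      K = ((n : ℂ) / N) • (F.conjTranspose * F)) := by
  have hN0 : (0 : ℝ) < N := by exact_mod_cast hn.trans hnN
  have hn0 : (0 : ℝ) < n := by exact_mod_cast hn
  have hN1 : (0 : ℝ) < (N : ℝ) - 1 := by
    have : (1 : ℝ) ≤ n := by exact_mod_cast hn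
    have : (n : ℝ) < N := by exact_mod_cast hnN
    linarith
  have hNn : (n : ℝ) < N := by exact_mod_cast hnN
  have hNC : (N : ℂ) ≠ 0 := Nat.cast_ne_zero.mpr (by omega)
  have hnC : (n : ℂ) ≠ 0 := Nat.cast_ne_zero.mpr (by omega)
  -- inclusion probabilities in terms of K
  have fact1 : ∀ k, ((incl1 P k : ℝ) : ℂ) = K k k := by
    intro k
    have h := hDSD {k}
    rw [show (Finset.univ.filter (fun s' => ({k} : Finset (Fin N)) ⊆ s'))
        = Finset.univ.filter (fun s' => k ∈ s') by
      apply Finset.filter_congr; intro s _; simp [Finset.singleton_subset_iff]] at h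
    rw [incl1, h]
    haveI : Unique {x // x ∈ ({k} : Finset (Fin N))} :=
      ⟨⟨⟨k, by simp⟩⟩, by rintro ⟨x, hx⟩; simp at hx; subst hx; rfl⟩
    have hd := (default : {x // x ∈ ({k} : Finset (Fin N))}).2
    simp only [Finset.mem_singleton] at hd
    rw [Matrix.det_unique, Matrix.submatrix_apply, hd]
  have fact2 : ∀ k l, k ≠ l → ((incl2 P k l : ℝ) : ℂ)
      = K k k * K l l - (‖K k l‖ : ℂ) ^ 2 := by
    intro k l hkl
    have h := hDSD {k, l}
    rw [show (Finset.univ.filter (fun s' => ({k, l} : Finset (Fin N)) ⊆ s'))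
        = Finset.univ.filter (fun s' => k ∈ s' ∧ l ∈ s') by
      apply Finset.filter_congr; intro s _
      simp [Finset.insert_subset_iff, Finset.singleton_subset_iff]] at h
    rw [incl2, h]
    set s : Finset (Fin N) := {k, l} with hs
    have hk : k ∈ s := by simp [hs]
    have hl : l ∈ s := by simp [hs]
    let e : Fin 2 ≃ {x // x ∈ s} :=
      { toFun := fun i => if i = 0 then ⟨k, hk⟩ else ⟨l, hl⟩
        invFun := fun x => if x.1 = k then 0 else 1
        left_inv := by intro i; fin_cases i <;> simp [hkl, Ne.symm hkl]
        right_inv := by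
          rintro ⟨x, hx⟩
          simp only [hs, Finset.mem_insert, Finset.mem_singleton] at hx
          rcases hx with rfl | rfl <;> simp [hkl, Ne.symm hkl] }
    rw [← Matrix.det_submatrix_equiv_self e, Matrix.det_fin_two]
    simp only [Matrix.submatrix_apply]
    have e00 : ((e 0) : Fin N) = k := by simp [e]
    have e11 : ((e 1) : Fin N) = l := by simp [e]
    rw [e00, e11]
    have hlk : K l k = (starRingEnd ℂ) (K k l) := (hK.apply l k).symm
    rw [hlk, Complex.mul_conj, Complex.normSq_eq_norm_sq]
    push_cast
    ring
  constructor
  · rintro ⟨h1, h2⟩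
    have hdiag : ∀ k, K k k = (n : ℂ) / N := fun k => (h1 k).2
    have habs : ∀ k l, k ≠ l → (‖K k l‖) ^ 2
        = (n : ℝ) * ((N : ℝ) - n) / ((N : ℝ) ^ 2 * ((N : ℝ) - 1)) := by
      intro k l hkl
      have h := (h2 k l hkl).2
      rw [hdiag k, hdiag l] at h
      have h' : (((n : ℝ) / N * ((n : ℝ) / N) - (‖K k l‖) ^ 2 : ℝ) : ℂ)
          = (((n : ℝ) * ((n : ℝ) - 1) / ((N : ℝ) * ((N : ℝ) - 1)) : ℝ) : ℂ) := by
        push_cast at h ⊢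
        linear_combination h
      have h'' := Complex.ofReal_inj.mp h'
      have hne : (N : ℝ) ≠ 0 := ne_of_gt hN0
      have hne1 : (N : ℝ) - 1 ≠ 0 := ne_of_gt hN1
      field_simp at h'' ⊢
      nlinarith [h'']
    have conj_mul_self : ∀ z : ℂ, (starRingEnd ℂ) z * z = ((‖z‖ : ℝ) : ℂ) ^ 2 :=
      fun z => by
        rw [mul_comm, Complex.mul_conj, Complex.normSq_eq_norm_sq]; push_cast; ring
    set lam := hK.eigenvalues with hlam
    set V : Matrix (Fin N) (Fin N) ℂ := (hK.eigenvectorUnitary : Matrix (Fin N) (Fin N) ℂ)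
      with hVdef
    have hVu : star V * V = 1 := Matrix.mem_unitaryGroup_iff'.mp hK.eigenvectorUnitary.2
    have hKentry : ∀ k l, K k l = ∑ i, (lam i : ℂ) * (V k i * (starRingEnd ℂ) (V l i)) := by
      intro k l
      conv_lhs => rw [hK.spectral_theorem]
      simp [Matrix.mul_apply, Matrix.diagonal_apply, Finset.sum_ite_eq, mul_comm, mul_assoc,
        mul_left_comm, Matrix.star_apply, RCLike.star_def, hVdef,
        Matrix.IsHermitian.eigenvectorUnitary_apply]
      rfl
    have tsum : ∑ i, lam i = (n : ℝ) := by
      have h1c : K.trace = ∑ i, (lam i : ℂ) := by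
        conv_lhs => rw [hK.spectral_theorem]
        rw [Unitary.conjStarAlgAut_apply, tr_aux1 _ hVu]; rfl
      have h2c : K.trace = ((n : ℝ) : ℂ) := by
        have ht : K.trace = ∑ k, K k k := by simp [Matrix.trace, Matrix.diag]
        rw [ht, Finset.sum_congr rfl (fun k _ => hdiag k), Finset.sum_const, Finset.card_univ,
          Fintype.card_fin, nsmul_eq_mul]
        push_cast
        field_simp
      have : ((∑ i, lam i : ℝ) : ℂ) = ((n : ℝ) : ℂ) := by
        push_cast
        rw [← h1c, h2c]; norm_cast
      exact_mod_cast this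
    have hds : ∑ k, ∑ l, (‖K k l‖) ^ 2 = (n : ℝ) := by
      have hterm : ∀ k : Fin N, ∑ l, (‖K k l‖) ^ 2
          = (n : ℝ) ^ 2 / (N : ℝ) ^ 2
            + ((N : ℝ) - 1) * ((n : ℝ) * ((N : ℝ) - n) / ((N : ℝ) ^ 2 * ((N : ℝ) - 1))) := by
        intro k
        rw [← Finset.add_sum_erase _ _ (Finset.mem_univ k)]
        congr 1
        · rw [hdiag k, show ((n : ℂ) / N) = (((n : ℝ) / N : ℝ) : ℂ) by push_cast; ring,
            Complex.norm_real, Real.norm_eq_abs, abs_of_nonneg (by positivity)]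
          field_simp
        · rw [Finset.sum_congr rfl (fun l hl =>
            habs k l (fun h => (Finset.mem_erase.mp hl).1 h.symm)), Finset.sum_const,
            Finset.card_erase_of_mem (Finset.mem_univ k), Finset.card_univ, Fintype.card_fin,
            nsmul_eq_mul, Nat.cast_sub (by omega), Nat.cast_one]
      rw [Finset.sum_congr rfl (fun k _ => hterm k), Finset.sum_const, Finset.card_univ,
        Fintype.card_fin, nsmul_eq_mul]
      field_simp
      ring
    have tsq : ∑ i, (lam i) ^ 2 = (n : ℝ) := by
      have h1c : (K * K).trace = ∑ i, (lam i : ℂ) ^ 2 := by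
        conv_lhs => rw [hK.spectral_theorem]
        rw [Unitary.conjStarAlgAut_apply, tr_aux2 _ hVu]; rfl
      have h2c : (K * K).trace = ((n : ℝ) : ℂ) := by
        have ht : (K * K).trace = ∑ k, ∑ l, K k l * K l k := by
          simp [Matrix.trace, Matrix.diag, Matrix.mul_apply]
        rw [ht, show ((n : ℝ) : ℂ) = ((∑ k, ∑ l, (‖K k l‖) ^ 2 : ℝ) : ℂ) by rw [hds]]
        push_cast
        refine Finset.sum_congr rfl fun k _ => Finset.sum_congr rfl fun l _ => ?_
        rw [show K l k = (starRingEnd ℂ) (K k l) from (hK.apply l k).symm, Complex.mul_conj,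
          Complex.normSq_eq_norm_sq]
        push_cast
        ring
      have : ((∑ i, (lam i) ^ 2 : ℝ) : ℂ) = ((n : ℝ) : ℂ) := by
        push_cast
        rw [← h1c, h2c]; norm_cast
      exact_mod_cast this
    have h01 : ∀ i, lam i = 0 ∨ lam i = 1 := by
      have hz : ∑ i, lam i * (1 - lam i) = 0 := by
        rw [Finset.sum_congr rfl (fun i _ => show lam i * (1 - lam i) = lam i - lam i ^ 2 by ring),
          Finset.sum_sub_distrib, tsum, tsq, sub_self]
      have hnn : ∀ i ∈ Finset.univ, (0 : ℝ) ≤ lam i * (1 - lam i) := fun i _ =>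
        mul_nonneg (hcontr i).1 (by linarith [(hcontr i).2])
      intro i
      have h := (Finset.sum_eq_zero_iff_of_nonneg hnn).mp hz i (Finset.mem_univ i)
      rcases mul_eq_zero.mp h with h' | h'
      · exact Or.inl h'
      · exact Or.inr (by linarith)
    set S : Finset (Fin N) := Finset.univ.filter (fun i => lam i = 1) with hS
    have hcard : S.card = n := by
      have h1 : ∑ i ∈ S, lam i = (S.card : ℝ) := by
        rw [Finset.sum_congr rfl (fun i hi => (Finset.mem_filter.mp hi).2), Finset.sum_const,
          nsmul_eq_mul, mul_one]
      have h2 : ∑ i ∈ Finset.univ \ S, lam i = 0 := by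
        apply Finset.sum_eq_zero
        intro i hi
        rcases h01 i with h | h
        · exact h
        · exact absurd (Finset.mem_filter.mpr ⟨Finset.mem_univ i, h⟩)
            (Finset.mem_sdiff.mp hi).2
      have h3 := tsum
      rw [← Finset.sum_sdiff (Finset.filter_subset (fun i => lam i = 1) Finset.univ), h2,
        zero_add] at h3
      rw [h1] at h3
      exact_mod_cast h3
    let e : Fin n ≃ {x // x ∈ S} := (Finset.equivFinOfCardEq hcard).symm
    set c : ℂ := ((Real.sqrt ((N : ℝ) / n) : ℝ) : ℂ) with hcdef
    have hcconj : (starRingEnd ℂ) c = c := Complex.conj_ofReal _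
    have hc2 : c * c = (((N : ℝ) / (n : ℝ) : ℝ) : ℂ) := by
      rw [hcdef, ← Complex.ofReal_mul, Real.mul_self_sqrt (by positivity)]
    set F : Matrix (Fin n) (Fin N) ℂ :=
      fun j k => c * (starRingEnd ℂ) (V k ((e j) : Fin N)) with hFdef
    have hsumS : ∀ k l : Fin N, ∑ j : Fin n,
        V k ((e j) : Fin N) * (starRingEnd ℂ) (V l ((e j) : Fin N))
        = ∑ i ∈ S, V k i * (starRingEnd ℂ) (V l i) := by
      intro k l
      rw [← Finset.sum_coe_sort S (fun i => V k i * (starRingEnd ℂ) (V l i))]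
      exact Equiv.sum_comp e (fun x : {x // x ∈ S} => V k (x : Fin N) * (starRingEnd ℂ) (V l (x : Fin N)))
    have hKS : ∀ k l, K k l = ∑ i ∈ S, V k i * (starRingEnd ℂ) (V l i) := by
      intro k l
      rw [hKentry k l,
        ← Finset.sum_filter_add_sum_filter_not Finset.univ (fun i => lam i = 1)
          (fun i => (lam i : ℂ) * (V k i * (starRingEnd ℂ) (V l i)))]
      have hA : ∑ i ∈ Finset.univ.filter (fun i => lam i = 1),
          (lam i : ℂ) * (V k i * (starRingEnd ℂ) (V l i))
          = ∑ i ∈ S, V k i * (starRingEnd ℂ) (V l i) :=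
        Finset.sum_congr rfl fun i hi => by
          rw [(Finset.mem_filter.mp hi).2]; push_cast; ring
      have hB : ∑ i ∈ Finset.univ.filter (fun i => ¬ lam i = 1),
          (lam i : ℂ) * (V k i * (starRingEnd ℂ) (V l i)) = 0 := by
        apply Finset.sum_eq_zero
        intro i hi
        rcases h01 i with h | h
        · rw [h]; push_cast; ring
        · exact absurd h (Finset.mem_filter.mp hi).2
      rw [hA, hB, add_zero]
    have hentF : ∀ k l, ∑ j, (starRingEnd ℂ) (F j k) * F j l
        = (((N : ℝ) / (n : ℝ) : ℝ) : ℂ) * K k l := by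
      intro k l
      rw [hKS k l, ← hsumS k l, ← hc2, Finset.mul_sum]
      refine Finset.sum_congr rfl fun j _ => ?_
      simp only [hFdef, map_mul, hcconj, RingHomCompTriple.comp_apply, RingHom.id_apply,
        Complex.conj_conj]
      ring
    have hNn' : (((N : ℝ) / (n : ℝ) : ℝ) : ℂ) ≠ 0 := by
      simp only [ne_eq, Complex.ofReal_eq_zero]
      positivity
    have hnN1 : ((n : ℂ) / N) * (((N : ℝ) / (n : ℝ) : ℝ) : ℂ) = 1 := by
      push_cast
      field_simp
    have hKFF : K = ((n : ℂ) / N) • (F.conjTranspose * F) := by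
      ext k l
      rw [Matrix.smul_apply, Matrix.mul_apply, smul_eq_mul]
      have : ∑ j, F.conjTranspose k j * F j l = ∑ j, (starRingEnd ℂ) (F j k) * F j l := by
        refine Finset.sum_congr rfl fun j _ => by rw [Matrix.conjTranspose_apply, RCLike.star_def]
      rw [this, hentF k l, ← mul_assoc, hnN1, one_mul]
    have hFFt : F * F.conjTranspose = ((N : ℂ) / n) • (1 : Matrix (Fin n) (Fin n) ℂ) := by
      ext j j'
      rw [Matrix.mul_apply, Matrix.smul_apply, smul_eq_mul]
      have hrow : ∑ k, F j k * F.conjTranspose k j'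
          = (c * c) * ∑ k, (starRingEnd ℂ) (V k ((e j) : Fin N)) * V k ((e j') : Fin N) := by
        rw [Finset.mul_sum]
        refine Finset.sum_congr rfl fun k _ => ?_
        rw [Matrix.conjTranspose_apply]
        simp only [hFdef, Matrix.conjTranspose_apply, star_mul', RCLike.star_def, map_mul,
          hcconj, Complex.conj_conj]
        ring
      have hVV : ∑ k, (starRingEnd ℂ) (V k ((e j) : Fin N)) * V k ((e j') : Fin N)
          = (1 : Matrix (Fin N) (Fin N) ℂ) ((e j) : Fin N) ((e j') : Fin N) := by
        rw [← hVu, Matrix.mul_apply]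
        refine Finset.sum_congr rfl fun k _ => by
          rw [Matrix.star_apply, RCLike.star_def]
      rw [hrow, hVV, hc2]
      have hiff : (((e j) : Fin N) = ((e j') : Fin N)) ↔ j = j' := by
        constructor
        · intro h
          exact e.injective (Subtype.ext h)
        · rintro rfl; rfl
      by_cases h : j = j'
      · subst h
        rw [Matrix.one_apply_eq, Matrix.one_apply_eq]
        push_cast
        ring
      · rw [Matrix.one_apply_ne (fun hc => h (hiff.mp (Subtype.ext_iff.mp (Subtype.ext hc)))),
          Matrix.one_apply_ne h]
        ring
    refine ⟨F, ?_, ?_, hFFt, hKFF⟩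
    · intro k
      have h := hentF k k
      rw [hdiag k] at h
      have h1 : ∑ j, (starRingEnd ℂ) (F j k) * F j k
          = ((∑ j, ‖F j k‖ ^ 2 : ℝ) : ℂ) := by
        push_cast
        exact Finset.sum_congr rfl fun j _ => conj_mul_self _
      rw [h1] at h
      have h2 : ((∑ j, ‖F j k‖ ^ 2 : ℝ) : ℂ) = ((1 : ℝ) : ℂ) := by
        rw [h]
        push_cast
        field_simp
      exact_mod_cast h2
    · intro k l hkl
      rw [hentF k l, norm_mul]
      have habsN : ‖((( N : ℝ) / (n : ℝ) : ℝ) : ℂ)‖ = (N : ℝ) / n := by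
        rw [Complex.norm_real, Real.norm_eq_abs, abs_of_nonneg (by positivity)]
      rw [habsN]
      have hsq : ((N : ℝ) - n) / ((n : ℝ) * ((N : ℝ) - 1))
          = ((N : ℝ) / n * ‖K k l‖) ^ 2 := by
        rw [mul_pow, habs k l hkl]
        field_simp
      rw [hsq, Real.sqrt_sq (by positivity)]
  · rintro ⟨F, hnorm, hang, hFF, hKF⟩
    have conj_mul_self : ∀ z : ℂ, (starRingEnd ℂ) z * z = ((‖z‖ : ℝ) : ℂ) ^ 2 :=
      fun z => by
        rw [mul_comm, Complex.mul_conj, Complex.normSq_eq_norm_sq]; push_cast; ring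
    have hent : ∀ k l, K k l = (n : ℂ) / N * ∑ j, (starRingEnd ℂ) (F j k) * F j l := by
      intro k l
      rw [hKF]
      simp [Matrix.smul_apply, Matrix.mul_apply, Matrix.conjTranspose_apply, smul_eq_mul,
        Finset.mul_sum]
    have hdiag : ∀ k, K k k = (n : ℂ) / N := by
      intro k
      rw [hent]
      have hsum' : ∑ j, (starRingEnd ℂ) (F j k) * F j k
          = ((∑ j, ‖F j k‖ ^ 2 : ℝ) : ℂ) := by
        push_cast
        exact Finset.sum_congr rfl fun j _ => conj_mul_self _
      rw [hsum', hnorm k]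
      simp
    have hx0 : (0 : ℝ) ≤ ((N : ℝ) - n) / ((n : ℝ) * ((N : ℝ) - 1)) := by
      apply div_nonneg <;> nlinarith
    have habs : ∀ k l, k ≠ l → ‖K k l‖
        = (n : ℝ) / N * Real.sqrt (((N : ℝ) - n) / ((n : ℝ) * ((N : ℝ) - 1))) := by
      intro k l hkl
      rw [hent, norm_mul, hang k l hkl]
      congr 1
      rw [show ((n : ℂ) / N) = (((n : ℝ) / N : ℝ) : ℂ) by push_cast; ring,
        Complex.norm_real, Real.norm_eq_abs, abs_of_nonneg (by positivity)]
    constructor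
    · intro k
      refine ⟨?_, hdiag k⟩
      have h := fact1 k
      rw [hdiag k] at h
      have : ((incl1 P k : ℝ) : ℂ) = (((n : ℝ) / N : ℝ) : ℂ) := by rw [h]; push_cast; ring
      exact_mod_cast this
    · intro k l hkl
      have hKey : K k k * K l l - (‖K k l‖ : ℂ) ^ 2 =
          (((n : ℝ) * ((n : ℝ) - 1) / ((N : ℝ) * ((N : ℝ) - 1)) : ℝ) : ℂ) := by
        rw [hdiag k, hdiag l, habs k l hkl]
        have hs : Real.sqrt (((N : ℝ) - n) / ((n : ℝ) * ((N : ℝ) - 1))) ^ 2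
            = ((N : ℝ) - n) / ((n : ℝ) * ((N : ℝ) - 1)) := Real.sq_sqrt hx0
        have hreal : (n : ℝ) / N * ((n : ℝ) / N)
            - ((n : ℝ) / N * Real.sqrt (((N : ℝ) - n) / ((n : ℝ) * ((N : ℝ) - 1)))) ^ 2
            = (n : ℝ) * ((n : ℝ) - 1) / ((N : ℝ) * ((N : ℝ) - 1)) := by
          rw [mul_pow, hs]
          field_simp
          ring
        calc (n : ℂ) / N * ((n : ℂ) / N)
            - ((((n : ℝ) / N * Real.sqrt (((N : ℝ) - n) / ((n : ℝ) * ((N : ℝ) - 1))) : ℝ)) : ℂ) ^ 2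
            = (((n : ℝ) / N * ((n : ℝ) / N)
              - ((n : ℝ) / N * Real.sqrt (((N : ℝ) - n) / ((n : ℝ) * ((N : ℝ) - 1)))) ^ 2 : ℝ) : ℂ) := by
              push_cast; ring
          _ = _ := by rw [hreal]
      refine ⟨?_, hKey⟩
      have h := fact2 k l hkl
      rw [hKey] at h
      exact_mod_cast h
end

section
/- Let n, r, N be positive integers with n < N, r < N, and gcd(r,N) = 1. Then ∑_{k=1}^{N−1} sin²(nrkπ/N) / sin²(rkπ/N) = n(N−n). -/
open Complex Finset

section helpers

lemma normSq_exp_sub_one' (α : ℝ) : Complex.normSq (Complex.exp (2*α*Complex.I) - 1) = 4 * Real.sin α ^ 2 := by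
  have h1 : ‖Complex.exp ((2*α : ℝ)*Complex.I)‖ = 1 := Complex.norm_exp_ofReal_mul_I _
  have h2 : (Complex.exp ((2*α : ℝ)*Complex.I)).re = Real.cos (2*α) := Complex.exp_ofReal_mul_I_re _
  have h3 : Complex.normSq (Complex.exp ((2*α:ℝ)*Complex.I)) = 1 := by
    rw [← Complex.sq_norm, h1]; norm_num
  have e : (2*α : ℂ) * Complex.I = ((2*α : ℝ) : ℂ) * Complex.I := by push_cast; ring
  rw [e, Complex.normSq_sub, h3]
  simp only [map_one, mul_one, h2, Complex.normSq_one]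
  rw [Real.cos_two_mul' α]
  rw [Real.sin_sq α]
  ring

lemma exp_ne_one_of_sin' (θ : ℝ) (hs : Real.sin θ ≠ 0) : Complex.exp (2*θ*Complex.I) ≠ 1 := by
  intro h
  rw [Complex.exp_eq_one_iff] at h
  obtain ⟨m, hm⟩ := h
  apply hs
  have : (2*θ : ℝ) = m * (2 * Real.pi) := by
    have h2 : ((2*θ : ℝ) : ℂ) * Complex.I = ((m * (2 * Real.pi) : ℝ) : ℂ) * Complex.I := by
      push_cast; linear_combination hm
    exact Complex.ofReal_injective (mul_right_cancel₀ Complex.I_ne_zero h2)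
  have hθ : θ = m * Real.pi := by linarith
  rw [hθ, Real.sin_int_mul_pi]

lemma normSq_geom' (θ : ℝ) (hs : Real.sin θ ≠ 0) (n : ℕ) :
    Complex.normSq (∑ p ∈ Finset.range n, Complex.exp (2*p*θ*Complex.I)) =
      Real.sin (n*θ) ^ 2 / Real.sin θ ^ 2 := by
  have hz := exp_ne_one_of_sin' θ hs
  have hrw : ∀ p : ℕ, Complex.exp (2*p*θ*Complex.I) = Complex.exp (2*θ*Complex.I) ^ p := by
    intro p
    rw [← Complex.exp_nat_mul]
    ring_nf
  simp only [hrw]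
  rw [geom_sum_eq hz]
  rw [Complex.normSq_div]
  rw [← Complex.exp_nat_mul]
  have e1 : (n : ℂ) * (2*θ*Complex.I) = 2*((n*θ : ℝ) : ℂ)*Complex.I := by push_cast; ring
  rw [e1, normSq_exp_sub_one']
  have e2 : (2*(θ:ℂ)*Complex.I) = 2*((θ : ℝ) : ℂ)*Complex.I := by norm_num
  rw [e2, normSq_exp_sub_one']
  rw [mul_div_mul_left _ _ (by norm_num : (4:ℝ) ≠ 0)]

lemma dvd_trick (r N : ℕ) (hgcd : Nat.gcd r N = 1) (a : ℤ) (h : (N:ℤ) ∣ a * r)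
    (habs : |a| < (N:ℤ)) (ha : a ≠ 0) : False := by
  have hco : IsCoprime (N:ℤ) (r:ℤ) := by
    rw [Int.isCoprime_iff_gcd_eq_one]
    simpa [Int.gcd, Nat.gcd_comm] using hgcd
  have hdvd : (N:ℤ) ∣ a := hco.dvd_of_dvd_mul_right h
  have : (N:ℤ) ≤ |a| := Int.le_of_dvd (abs_pos.mpr ha) ((dvd_abs _ _).mpr hdvd)
  omega

lemma sin_ne (r N k : ℕ) (hgcd : Nat.gcd r N = 1) (hN : 0 < N) (hk1 : 1 ≤ k) (hk2 : k < N) :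
    Real.sin ((r:ℝ) * k * Real.pi / N) ≠ 0 := by
  intro h
  rw [Real.sin_eq_zero_iff] at h
  obtain ⟨m, hm⟩ := h
  have hpi := Real.pi_ne_zero
  have hN0 : (N:ℝ) ≠ 0 := Nat.cast_ne_zero.mpr hN.ne'
  have hreal : (m:ℝ) * N = (k:ℝ) * r := by
    field_simp at hm
    have := mul_right_cancel₀ hpi (by rw [hm]; ring : (m:ℝ) * N * Real.pi = (k:ℝ) * r * Real.pi)
    linarith [this]
  have hint : m * (N:ℤ) = (k:ℤ) * r := by exact_mod_cast hreal
  exact dvd_trick r N hgcd k (hint ▸ Dvd.intro m (by ring)) (by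
      rw [_root_.abs_of_nonneg (by positivity : (0:ℤ) ≤ (k:ℤ))]; exact_mod_cast hk2)
    (by simp; omega)

lemma z_pow_N (r N : ℕ) (hN : 0 < N) (a : ℤ) :
    (Complex.exp (((2*(a:ℝ)*r*Real.pi/N) : ℝ) * Complex.I)) ^ N = 1 := by
  rw [← Complex.exp_nat_mul]
  have : (N:ℂ) * (((2*(a:ℝ)*r*Real.pi/N) : ℝ) * Complex.I) = ((a*r : ℤ):ℂ) * (2*Real.pi*Complex.I) := by
    have hN0 : (N:ℂ) ≠ 0 := Nat.cast_ne_zero.mpr hN.ne'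
    push_cast
    field_simp
  rw [this, Complex.exp_int_mul_two_pi_mul_I]

lemma z_ne_one (r N : ℕ) (hgcd : Nat.gcd r N = 1) (hN : 0 < N) (a : ℤ) (ha : a ≠ 0)
    (habs : |a| < (N:ℤ)) :
    Complex.exp (((2*(a:ℝ)*r*Real.pi/N) : ℝ) * Complex.I) ≠ 1 := by
  intro h
  rw [Complex.exp_eq_one_iff] at h
  obtain ⟨m, hm⟩ := h
  have h2 : (((2*(a:ℝ)*r*Real.pi/N) : ℝ):ℂ) * Complex.I = ((m * (2*Real.pi) : ℝ):ℂ) * Complex.I := by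
    push_cast
    push_cast at hm
    linear_combination hm
  have h3 : ((2*(a:ℝ)*r*Real.pi/N) : ℝ) = (m * (2*Real.pi) : ℝ) :=
    Complex.ofReal_injective (mul_right_cancel₀ Complex.I_ne_zero h2)
  have hN0 : (N:ℝ) ≠ 0 := Nat.cast_ne_zero.mpr hN.ne'
  have hreal : (a:ℝ) * r = m * N := by
    field_simp at h3
    have := mul_right_cancel₀ Real.pi_ne_zero
      (by rw [h3]; ring : (a:ℝ) * r * Real.pi = (m:ℝ) * N * Real.pi)
    linarith [this]
  have hint : a * (r:ℤ) = m * N := by exact_mod_cast hreal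
  exact dvd_trick r N hgcd a ⟨m, by linarith [hint]⟩ habs ha

-- inner geometric sum over k
lemma innerSumAux (r N : ℕ) (hgcd : Nat.gcd r N = 1) (hN : 0 < N) (a : ℤ) (habs : |a| < (N:ℤ)) :
    ∑ k ∈ Finset.Icc 1 (N-1), (Complex.exp (((2*(a:ℝ)*r*Real.pi/N) : ℝ) * Complex.I)) ^ k
      = (if a = 0 then (N:ℂ) else 0) - 1 := by
  set z := Complex.exp (((2*(a:ℝ)*r*Real.pi/N) : ℝ) * Complex.I) with hz
  have hIcc : Finset.Icc 1 (N-1) = Finset.Ico 1 N := by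
    rw [← Finset.Ico_add_one_right_eq_Icc]
    congr 1
    omega
  have hsplit : ∑ k ∈ Finset.Ico 0 N, z ^ k
      = (∑ k ∈ Finset.Ico 0 1, z ^ k) + ∑ k ∈ Finset.Ico 1 N, z ^ k :=
    (Finset.sum_Ico_consecutive _ (by omega) (by omega)).symm
  have h01 : ∑ k ∈ Finset.Ico 0 1, z ^ k = 1 := by simp
  have hrange : ∑ k ∈ Finset.Ico 0 N, z ^ k = ∑ k ∈ Finset.range N, z ^ k := by
    rw [Finset.range_eq_Ico]
  rw [hIcc]
  have : ∑ k ∈ Finset.Ico 1 N, z ^ k = (∑ k ∈ Finset.range N, z ^ k) - 1 := by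
    rw [← hrange, hsplit, h01]; ring
  rw [this]
  congr 1
  by_cases ha : a = 0
  · subst ha
    have : z = 1 := by
      rw [hz]
      norm_num
    rw [this]
    simp
  · rw [if_neg ha]
    rw [geom_sum_eq (z_ne_one r N hgcd hN a ha habs)]
    rw [z_pow_N r N hN a]
    simp

end helpers

/-- **A trigonometric identity from fixed size determinantal sampling designs**:
for `n < N`, `r < N` with `gcd(r,N) = 1`,
`∑_{k=1}^{N−1} sin²(nrkπ/N)/sin²(rkπ/N) = n(N−n)`. -/
theorem sin_quotient_sum (n r N : ℕ) (hn : 0 < n) (hnN : n < N)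
    (hr : 0 < r) (hrN : r < N) (hgcd : Nat.gcd r N = 1) :
    ∑ k ∈ Finset.Icc 1 (N - 1),
      Real.sin ((n : ℝ) * r * k * Real.pi / N) ^ 2 /
        Real.sin ((r : ℝ) * k * Real.pi / N) ^ 2 = (n : ℝ) * ((N : ℝ) - n) := by
  have hN : 0 < N := lt_trans hn hnN
  have hN0 : (N:ℝ) ≠ 0 := Nat.cast_ne_zero.mpr hN.ne'
  set θ : ℕ → ℝ := fun k => (r:ℝ) * k * Real.pi / N with hθ
  -- step 1 : rewrite each term as normSq
  have step1 : ∀ k ∈ Finset.Icc 1 (N-1),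
      Real.sin ((n : ℝ) * r * k * Real.pi / N) ^ 2 / Real.sin ((r : ℝ) * k * Real.pi / N) ^ 2
        = Complex.normSq (∑ p ∈ Finset.range n, Complex.exp (2*p*(θ k)*Complex.I)) := by
    intro k hk
    rw [Finset.mem_Icc] at hk
    have hs : Real.sin (θ k) ≠ 0 := sin_ne r N k hgcd hN hk.1 (by omega)
    rw [normSq_geom' (θ k) hs n]
    congr 2
    rw [hθ]
    ring
  rw [Finset.sum_congr rfl step1]
  -- step 2 : complex computation
  apply Complex.ofReal_injective
  push_cast [Complex.ofReal_sum]
  have step2 : ∀ k ∈ Finset.Icc 1 (N-1),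
      ((Complex.normSq (∑ p ∈ Finset.range n, Complex.exp (2*p*(θ k)*Complex.I)) : ℝ) : ℂ)
        = ∑ p ∈ Finset.range n, ∑ q ∈ Finset.range n,
            (Complex.exp (((2*((p - q : ℤ) : ℝ)*r*Real.pi/N) : ℝ) * Complex.I)) ^ k := by
    intro k hk
    rw [← Complex.mul_conj]
    rw [map_sum]
    rw [Finset.sum_mul_sum]
    refine Finset.sum_congr rfl fun p _ => Finset.sum_congr rfl fun q _ => ?_
    rw [← Complex.exp_conj, ← Complex.exp_add, ← Complex.exp_nat_mul]
    congr 1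
    simp only [map_mul, Complex.conj_ofReal, Complex.conj_I, map_ofNat, map_natCast]
    rw [hθ]
    push_cast
    field_simp
    ring
  rw [Finset.sum_congr rfl step2]
  rw [Finset.sum_comm]
  rw [Finset.sum_congr rfl (fun p _ => Finset.sum_comm)]
  have step3 : ∀ p ∈ Finset.range n, ∀ q ∈ Finset.range n,
      ∑ k ∈ Finset.Icc 1 (N-1),
          (Complex.exp (((2*((p - q : ℤ) : ℝ)*r*Real.pi/N) : ℝ) * Complex.I)) ^ k
        = (if p = q then (N:ℂ) else 0) - 1 := by
    intro p hp q hq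
    rw [Finset.mem_range] at hp hq
    have habs : |(p:ℤ) - q| < (N:ℤ) := by
      rw [abs_lt]; omega
    rw [innerSumAux r N hgcd hN ((p:ℤ)-q) habs]
    congr 1
    simp only [sub_eq_zero]
    norm_cast
  calc ∑ p ∈ Finset.range n, ∑ q ∈ Finset.range n,
        ∑ k ∈ Finset.Icc 1 (N-1),
          (Complex.exp (((2*((p - q : ℤ) : ℝ)*r*Real.pi/N) : ℝ) * Complex.I)) ^ k
      = ∑ p ∈ Finset.range n, ∑ q ∈ Finset.range n, ((if p = q then (N:ℂ) else 0) - 1) := by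
        exact Finset.sum_congr rfl fun p hp => Finset.sum_congr rfl (step3 p hp)
    _ = (n:ℂ) * ((N:ℂ) - n) := by
        simp only [Finset.sum_sub_distrib, Finset.sum_ite_eq, Finset.mem_range,
          Finset.sum_const, Finset.card_range, nsmul_eq_mul, mul_one]
        rw [Finset.sum_congr rfl (fun p hp => by rw [if_pos (Finset.mem_range.mp hp)])]
        simp [Finset.sum_const, Finset.card_range]
        ring
end

section
/- Let N be a prime number and n < N a positive integer. For each r with 1 ≤ r ≤ N−1, let K^{r,N,n} be the N×N complex matrix with entries K^{r,N,n}_{kl} = (1/N) ∑_{p=0}^{n−1} e^{2πi r (k−l) p / N}, and let K^{N,n} be the N×N matrix with diagonal entries n/N and off-diagonal entries (N−n)/(N(N−1)). Then K^{N,n} = (1/(N−1)) ∑_{r=1}^{N−1} K^{r,N,n}. -/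
/-- The Toeplitz kernel `K^{r,N,n}` built on the primitive `N`-th root of unity
`e^{2πir/N}`: `K^{r,N,n}_{kl} = (1/N) ∑_{p=0}^{n−1} e^{2πi r (k−l) p / N}`. -/
noncomputable def rootKernel (r N n : ℕ) : Matrix (Fin N) (Fin N) ℂ := fun k l =>
  (1 / (N : ℂ)) * ∑ p ∈ Finset.range n,
    Complex.exp (2 * (Real.pi : ℂ) * Complex.I * (r : ℂ) *
      (((k : ℕ) : ℂ) - ((l : ℕ) : ℂ)) * (p : ℂ) / (N : ℂ))

lemma geom_root_sum (N : ℕ) (hN : 0 < N) (m : ℤ) (h : ¬ (N:ℤ) ∣ m) :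
    ∑ r ∈ Finset.range N,
      Complex.exp (2 * (Real.pi : ℂ) * Complex.I * (m : ℂ) / (N : ℂ)) ^ r = 0 := by
  have hNC : (N:ℂ) ≠ 0 := Nat.cast_ne_zero.mpr hN.ne'
  have hπ : (Real.pi : ℂ) ≠ 0 := Complex.ofReal_ne_zero.mpr Real.pi_ne_zero
  have h2 : (2 * (Real.pi:ℂ) * Complex.I) ≠ 0 := by
    simp [hπ, Complex.I_ne_zero]
  set ζ := Complex.exp (2 * (Real.pi : ℂ) * Complex.I * (m : ℂ) / (N : ℂ)) with hζ
  have hζ1 : ζ ≠ 1 := by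
    intro hh
    rw [hζ, Complex.exp_eq_one_iff] at hh
    obtain ⟨z, hz⟩ := hh
    apply h
    refine ⟨z, ?_⟩
    have hC : (m : ℂ) = (N : ℂ) * z := by
      field_simp at hz
      apply mul_left_cancel₀ h2
      linear_combination (2 * (Real.pi:ℂ) * Complex.I) * hz
    exact_mod_cast hC
  have hζN : ζ ^ N = 1 := by
    rw [hζ, ← Complex.exp_nat_mul]
    have harg : (N:ℂ) * (2 * (Real.pi : ℂ) * Complex.I * (m : ℂ) / (N : ℂ)) =
        (m : ℂ) * (2 * (Real.pi : ℂ) * Complex.I) := by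
      field_simp
    rw [harg, Complex.exp_int_mul_two_pi_mul_I]
  rw [geom_sum_eq hζ1, hζN]
  simp


/-- **For `N` prime, `K^{N,n}` is the average of the kernels `K^{r,N,n}`,
`r = 1, …, N−1`**, where `K^{N,n}` has diagonal entries `n/N` and off-diagonal
entries `(N−n)/(N(N−1))`. -/
theorem equal_kernel_average (N n : ℕ) (hN : Nat.Prime N) (hn : 0 < n) (hnN : n < N) :
    (fun k l : Fin N =>
        if k = l then (n : ℂ) / N else ((N : ℂ) - n) / ((N : ℂ) * ((N : ℂ) - 1))) =
      (1 / ((N : ℂ) - 1)) • ∑ r ∈ Finset.Icc 1 (N - 1), rootKernel r N n := by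
  have hN2 : 2 ≤ N := hN.two_le
  have hNC : (N:ℂ) ≠ 0 := Nat.cast_ne_zero.mpr hN.pos.ne'
  have hN1C : (N:ℂ) - 1 ≠ 0 := by
    intro h
    have h1 : ((N:ℕ):ℂ) = ((1:ℕ):ℂ) := by push_cast; linear_combination h
    have h2 := Nat.cast_injective h1
    omega
  have hcard : (Finset.Icc 1 (N - 1)).card = N - 1 := by
    rw [Nat.card_Icc]; omega
  have hcastN1 : ((N - 1 : ℕ) : ℂ) = (N:ℂ) - 1 := by
    push_cast [Nat.cast_sub (by omega : 1 ≤ N)]; ring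
  funext k l
  have happ : ((1 / ((N : ℂ) - 1)) • ∑ r ∈ Finset.Icc 1 (N - 1), rootKernel r N n) k l
      = (1 / ((N:ℂ)-1)) * ∑ r ∈ Finset.Icc 1 (N - 1), rootKernel r N n k l := by
    simp [Matrix.smul_apply, Matrix.sum_apply]
  rw [happ]
  by_cases hkl : k = l
  · subst hkl
    rw [if_pos rfl]
    have hr0 : ∀ r ∈ Finset.Icc 1 (N-1), rootKernel r N n k k = (n:ℂ) / N := by
      intro r _
      simp [rootKernel, div_eq_mul_inv, mul_comm]
    rw [Finset.sum_congr rfl hr0, Finset.sum_const, hcard, nsmul_eq_mul, hcastN1]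
    field_simp
  · rw [if_neg hkl]
    -- rewrite each rootKernel entry via powers
    set d : ℤ := (k : ℕ) - (l : ℕ) with hd
    have hdne : d ≠ 0 := by
      simp only [hd, sub_ne_zero]
      exact_mod_cast fun h => hkl (Fin.ext h)
    have hdlt : |d| < (N:ℤ) := by
      rw [hd, abs_sub_lt_iff]
      constructor <;> [skip; skip] <;>
        · have := k.isLt; have := l.isLt; omega
    have hNd : ¬ (N:ℤ) ∣ d := fun hdvd => hdne (Int.eq_zero_of_abs_lt_dvd hdvd hdlt)
    have hker : ∀ r ∈ Finset.Icc 1 (N-1), rootKernel r N n k l =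
        (1 / (N:ℂ)) * ∑ p ∈ Finset.range n,
          Complex.exp (2 * (Real.pi : ℂ) * Complex.I * ((d * p : ℤ) : ℂ) / (N : ℂ)) ^ r := by
      intro r _
      unfold rootKernel
      congr 1
      apply Finset.sum_congr rfl
      intro p _
      rw [← Complex.exp_nat_mul]
      congr 1
      push_cast [hd]
      ring
    rw [Finset.sum_congr rfl hker, ← Finset.mul_sum, Finset.sum_comm]
    -- now inner sums over r
    have hIns : Finset.range N = insert 0 (Finset.Icc 1 (N-1)) := by
      ext x
      simp [Finset.mem_range, Finset.mem_Icc, Finset.mem_insert]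
      omega
    have hinner : ∀ p ∈ Finset.range n,
        (∑ r ∈ Finset.Icc 1 (N-1),
          Complex.exp (2 * (Real.pi : ℂ) * Complex.I * ((d * p : ℤ) : ℂ) / (N : ℂ)) ^ r)
        = if p = 0 then ((N:ℂ) - 1) else -1 := by
      intro p hp
      rcases eq_or_ne p 0 with h0 | h0
      · subst h0
        rw [if_pos rfl]
        have : ∀ r ∈ Finset.Icc 1 (N-1),
            Complex.exp (2 * (Real.pi : ℂ) * Complex.I * ((d * (0:ℕ) : ℤ) : ℂ) / (N : ℂ)) ^ r = 1 := by
          intro r _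
          norm_num
        rw [Finset.sum_congr rfl this, Finset.sum_const, hcard, nsmul_eq_mul, hcastN1, mul_one]
      · rw [if_neg h0]
        have hple : p < N := lt_trans (Finset.mem_range.mp hp) hnN
        have hNdp : ¬ (N:ℤ) ∣ d * p := by
          intro hdvd
          rcases (Int.Prime.dvd_mul' hN hdvd) with h1 | h1
          · exact hNd h1
          · have := Int.le_of_dvd (by exact_mod_cast Nat.pos_of_ne_zero h0) h1
            omega
        have hfull := geom_root_sum N hN.pos (d * p) hNdp
        rw [hIns, Finset.sum_insert (by simp)] at hfull
        simp only [pow_zero] at hfull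
        linear_combination hfull
    rw [Finset.sum_congr rfl hinner]
    -- split range n at 0
    have hIns' : Finset.range n = insert 0 (Finset.Ico 1 n) := by
      ext x
      simp [Finset.mem_range, Finset.mem_Ico, Finset.mem_insert]
      omega
    rw [hIns', Finset.sum_insert (by simp)]
    rw [if_pos rfl]
    have : ∀ p ∈ Finset.Ico 1 n, (if p = 0 then ((N:ℂ) - 1) else -1) = -1 := by
      intro p hp
      rw [if_neg (by simp at hp; omega)]
    rw [Finset.sum_congr rfl this, Finset.sum_const, Nat.card_Ico, nsmul_eq_mul]
    have hcastn1 : ((n - 1 : ℕ) : ℂ) = (n:ℂ) - 1 := by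
      push_cast [Nat.cast_sub (by omega : 1 ≤ n)]; ring
    rw [hcastn1]
    field_simp
    ring
end
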